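/- arXiv:2505.19520 — 5 statements merged into one kernel-verified Lean document; each statement's English description precedes it below -/
import Mathlib

section
/- Every maximal peak-pit Condorcet domain on a finite set A of alternatives is directly connected. -/
/-!
Common definitions for formalizing Condorcet domains.

A linear order on a finite set `A : Finset α` of alternatives is encoded as a
duplicate-free list enumerating the elements of `A` from most preferred (head)
to least preferred (last).
-/

variable {α : Type*}

/-- `l` is a linear order on the finite set `A` of alternatives. -/
def IsLinOrd [DecidableEq α] (A : Finset α) (l : List α) : Prop :=
  l.Nodup ∧ l.toFinset = A

/-- The restriction of a linear order `l` to the subset `S` of alternatives. -/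
def restrictOrd [DecidableEq α] (l : List α) (S : Finset α) : List α :=
  l.filter (fun x => decide (x ∈ S))

/-- The restriction of a domain `D` to the subset `S` of alternatives. -/
def restrictDom [DecidableEq α] (D : Set (List α)) (S : Finset α) : Set (List α) :=
  (fun l => restrictOrd l S) '' D

/-- The never-condition `x N (k+1)`: no linear order in `E` ranks `x` in
position `k+1` (positions are counted from `1`, so `k : Fin 3` is the
zero-based index).  `k = 0` is a never-top condition, `k = 2` a never-bottom
condition. -/
def NeverCond (E : Set (List α)) (x : α) (k : Fin 3) : Prop :=
  ∀ l ∈ E, l[(k : ℕ)]? ≠ some x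

/-- The set of never-conditions (encoded as pairs `(x, k)`) satisfied by a
domain `E` on the triple `T`. -/
def NeverConds (T : Finset α) (E : Set (List α)) : Set (α × Fin 3) :=
  {p | p.1 ∈ T ∧ NeverCond E p.1 p.2}

/-- The set of peak-pit conditions (never-top or never-bottom conditions)
satisfied by a domain `E` on the triple `T`. -/
def PeakPitConds (T : Finset α) (E : Set (List α)) : Set (α × Fin 3) :=
  {p | p.1 ∈ T ∧ (p.2 = 0 ∨ p.2 = 2) ∧ NeverCond E p.1 p.2}

/-- `D` is a Condorcet domain on `A`: a set of linear orders on `A` whose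
restriction to every triple of distinct alternatives satisfies some
never-condition. -/
def IsCondorcetDomain [DecidableEq α] (A : Finset α) (D : Set (List α)) : Prop :=
  (∀ l ∈ D, IsLinOrd A l) ∧
    ∀ a b c : α, a ∈ A → b ∈ A → c ∈ A → a ≠ b → a ≠ c → b ≠ c →
      ∃ x ∈ ({a, b, c} : Finset α), ∃ k : Fin 3,
        NeverCond (restrictDom D {a, b, c}) x k

/-- `D` is a peak-pit Condorcet domain on `A`: a set of linear orders on `A`
whose restriction to every triple of distinct alternatives satisfies a
never-top or a never-bottom condition. -/
def IsPeakPitDomain [DecidableEq α] (A : Finset α) (D : Set (List α)) : Prop :=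
  (∀ l ∈ D, IsLinOrd A l) ∧
    ∀ a b c : α, a ∈ A → b ∈ A → c ∈ A → a ≠ b → a ≠ c → b ≠ c →
      ∃ x ∈ ({a, b, c} : Finset α),
        NeverCond (restrictDom D {a, b, c}) x 0 ∨
          NeverCond (restrictDom D {a, b, c}) x 2

/-- Two linear orders are alike if they differ by a swap of two adjacent
alternatives. -/
def Alike (R T : List α) : Prop :=
  ∃ (l₁ l₂ : List α) (x y : α), x ≠ y ∧
    R = l₁ ++ x :: y :: l₂ ∧ T = l₁ ++ y :: x :: l₂

/-- `P` is a path of alike linear orders on `L(A)`. -/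
def IsPathOn [DecidableEq α] (A : Finset α) (P : List (List α)) : Prop :=
  P ≠ [] ∧ (∀ l ∈ P, IsLinOrd A l) ∧ P.Chain' Alike

/-- `P` is a path of alike linear orders on `L(A)` connecting `R` and `T`. -/
def IsPath [DecidableEq α] (A : Finset α) (P : List (List α)) (R T : List α) : Prop :=
  IsPathOn A P ∧ P.head? = some R ∧ P.getLast? = some T

/-- `P` is a geodesic on `L(A)` connecting `R` and `T`: a path of alike linear
orders of minimal length among all such paths. -/
def IsGeodesic [DecidableEq α] (A : Finset α) (P : List (List α)) (R T : List α) : Prop :=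
  IsPath A P R T ∧ ∀ Q : List (List α), IsPath A Q R T → P.length ≤ Q.length

/-- The switching pair of alternatives between two alike linear orders (as an
unordered pair); `none` if the two lists do not differ. -/
def switchPair? [DecidableEq α] (R T : List α) : Option (Sym2 α) :=
  ((R.zip T).find? (fun p => decide (p.1 ≠ p.2))).map (Function.uncurry Sym2.mk)

/-- `S(P)`: the sequence of switching pairs of a path of alike linear orders. -/
def switchSeq [DecidableEq α] (P : List (List α)) : List (Sym2 α) :=
  (P.zip P.tail).filterMap (fun p => switchPair? p.1 p.2)

/-- The restriction of a path to the subset `B`: restrict every member and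
remove consecutive duplicates. -/
def restrictPath [DecidableEq α] (P : List (List α)) (B : Finset α) : List (List α) :=
  (P.map (fun l => restrictOrd l B)).destutter (· ≠ ·)

/-- `D` is connected: any two of its members are joined by a path of alike
linear orders lying entirely in `D`. -/
def ConnectedDomain [DecidableEq α] (A : Finset α) (D : Set (List α)) : Prop :=
  ∀ R ∈ D, ∀ T ∈ D, ∃ P : List (List α), IsPath A P R T ∧ ∀ l ∈ P, l ∈ D

/-- `D` is directly connected: any two of its members are joined by a geodesic
lying entirely in `D`. -/
def DirectlyConnectedDomain [DecidableEq α] (A : Finset α) (D : Set (List α)) : Prop :=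
  ∀ R ∈ D, ∀ T ∈ D, ∃ P : List (List α), IsGeodesic A P R T ∧ ∀ l ∈ P, l ∈ D

/-- Two unordered pairs of alternatives are disjoint. -/
def DisjointPair (p q : Sym2 α) : Prop := ∀ x : α, x ∈ p → x ∉ q

/-- One swap of an adjacent disjoint pair of switching pairs in a sequence of
switching pairs. -/
inductive AdjSwap : List (Sym2 α) → List (Sym2 α) → Prop
  | swap (l₁ l₂ : List (Sym2 α)) (p q : Sym2 α) (h : DisjointPair p q) :
      AdjSwap (l₁ ++ p :: q :: l₂) (l₁ ++ q :: p :: l₂)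

/-- Two paths are equivalent if their sequences of switching pairs differ by a
finite number of swaps of adjacent disjoint pairs of switching pairs. -/
def PathEquiv [DecidableEq α] (P Q : List (List α)) : Prop :=
  Relation.ReflTransGen AdjSwap (switchSeq P) (switchSeq Q)

/-- Two domains are isomorphic if some bijection between the underlying sets of
alternatives maps one domain onto the other (acting position-wise on linear
orders). -/
def DomIsomorphic (A B : Finset α) (D E : Set (List α)) : Prop :=
  ∃ f : α → α, Set.BijOn f ↑A ↑B ∧ E = (fun l => l.map f) '' D

namespace CD
variable [DecidableEq α]


/-- `u` appears strictly before `v` in `l`. -/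
def COrd (l : List α) (u v : α) : Prop :=
  u ∈ l ∧ v ∈ l ∧ l.idxOf u < l.idxOf v

lemma COrd.mem1 {l : List α} {u v : α} (h : COrd l u v) : u ∈ l := h.1
lemma COrd.mem2 {l : List α} {u v : α} (h : COrd l u v) : v ∈ l := h.2.1

lemma COrd.ne {l : List α} {u v : α} (h : COrd l u v) : u ≠ v := by
  rintro rfl; exact lt_irrefl _ h.2.2

lemma COrd.trans' {l : List α} {u v w : α} (h1 : COrd l u v) (h2 : COrd l v w) :
    COrd l u w := ⟨h1.1, h2.2.1, h1.2.2.trans h2.2.2⟩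

lemma COrd.asymm {l : List α} {u v : α} (h1 : COrd l u v) (h2 : COrd l v u) : False :=
  lt_asymm h1.2.2 h2.2.2

lemma cord_total {l : List α} {u v : α} (hu : u ∈ l) (hv : v ∈ l) (huv : u ≠ v) :
    COrd l u v ∨ COrd l v u := by
  rcases lt_trichotomy (l.idxOf u) (l.idxOf v) with h | h | h
  · exact Or.inl ⟨hu, hv, h⟩
  · exfalso; apply huv
    have h1 : l[l.idxOf u]'(List.idxOf_lt_length_iff.2 hu) = u := List.getElem_idxOf _
    have h2 : l[l.idxOf v]'(List.idxOf_lt_length_iff.2 hv) = v := List.getElem_idxOf _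
    rw [← h1, ← h2]; simp [h]
  · exact Or.inr ⟨hv, hu, h⟩

lemma idxOf_cons_of_ne {l : List α} {a u : α} (hne : a ≠ u) :
    (a :: l).idxOf u = l.idxOf u + 1 := List.idxOf_cons_ne _ hne

lemma cord_cons_iff {l : List α} {a u v : α} (ha : a ∉ l) :
    COrd (a :: l) u v ↔ (u = a ∧ v ∈ l) ∨ COrd l u v := by
  constructor
  · rintro ⟨hu, hv, hlt⟩
    rcases eq_or_ne u a with rfl | hua
    · have hva : v ≠ u := by
        rintro rfl; exact lt_irrefl _ hlt
      rcases List.mem_cons.1 hv with rfl | hv'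
      · exact absurd rfl hva
      · exact Or.inl ⟨rfl, hv'⟩
    · have hu' : u ∈ l := by
        rcases List.mem_cons.1 hu with rfl | h
        · exact absurd rfl hua
        · exact h
      have hva : v ≠ a := by
        rintro rfl
        rw [List.idxOf_cons_self] at hlt
        omega
      have hv' : v ∈ l := by
        rcases List.mem_cons.1 hv with rfl | h
        · exact absurd rfl hva
        · exact h
      right
      refine ⟨hu', hv', ?_⟩
      rw [idxOf_cons_of_ne (Ne.symm hua), idxOf_cons_of_ne (Ne.symm hva)] at hlt
      omega
  · rintro (⟨rfl, hv⟩ | ⟨hu, hv, hlt⟩)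
    · have hva : v ≠ u := by rintro rfl; exact ha hv
      refine ⟨List.mem_cons_self, List.mem_cons_of_mem _ hv, ?_⟩
      rw [List.idxOf_cons_self, idxOf_cons_of_ne hva.symm]
      omega
    · have hua : u ≠ a := by rintro rfl; exact ha hu
      have hva : v ≠ a := by rintro rfl; exact ha hv
      refine ⟨List.mem_cons_of_mem _ hu, List.mem_cons_of_mem _ hv, ?_⟩
      rw [idxOf_cons_of_ne hua.symm, idxOf_cons_of_ne hva.symm]
      omega

/-- bridge: pair sublist iff COrd, for nodup lists -/
lemma pair_sublist_iff_cord {l : List α} (hl : l.Nodup) {u v : α} :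
    List.Sublist [u, v] l ↔ COrd l u v := by
  induction l with
  | nil => simp [COrd]
  | cons a t ih =>
    have ha : a ∉ t := (List.nodup_cons.1 hl).1
    have ht : t.Nodup := (List.nodup_cons.1 hl).2
    rw [cord_cons_iff ha, ← ih ht]
    constructor
    · intro h
      rcases h with _ | _
      case cons h => right; exact h
      case cons.mp.cons_cons h => left; exact ⟨rfl, (List.singleton_sublist).1 h⟩
    · rintro (⟨rfl, hv⟩ | h)
      · exact (List.singleton_sublist.2 hv).cons₂ _
      · exact h.cons _


lemma cord_filter {l : List α} (hl : l.Nodup) {p : α → Bool} {u v : α} :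
    COrd (l.filter p) u v ↔ COrd l u v ∧ p u = true ∧ p v = true := by
  have hf : (l.filter p).Nodup := hl.filter p
  rw [← pair_sublist_iff_cord hf, ← pair_sublist_iff_cord hl]
  constructor
  · intro h
    have h1 := h.trans (List.filter_sublist)
    have hu : u ∈ l.filter p := h.subset (by simp)
    have hv : v ∈ l.filter p := h.subset (by simp)
    exact ⟨h1, (List.mem_filter.1 hu).2, (List.mem_filter.1 hv).2⟩
  · rintro ⟨h, hu, hv⟩
    have := h.filter p
    rwa [List.filter_cons, if_pos hu, List.filter_cons, if_pos hv, List.filter_nil] at this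

lemma cord_restr {l : List α} (hl : l.Nodup) {B : Finset α} {u v : α} :
    COrd (restrictOrd l B) u v ↔ COrd l u v ∧ u ∈ B ∧ v ∈ B := by
  rw [restrictOrd, cord_filter hl]; simp

lemma mem_restr {l : List α} {B : Finset α} {u : α} :
    u ∈ restrictOrd l B ↔ u ∈ l ∧ u ∈ B := by simp [restrictOrd]

lemma head_char {l : List α} {x : α} :
    l[0]? = some x ↔ x ∈ l ∧ ∀ y ∈ l, y ≠ x → COrd l x y := by
  cases l with
  | nil => simp
  | cons a t =>
    simp only [List.getElem?_cons_zero, Option.some.injEq]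
    constructor
    · rintro rfl
      refine ⟨List.mem_cons_self, ?_⟩
      intro y hy hyx
      have hyt : y ∈ t := by
        rcases List.mem_cons.1 hy with rfl | h
        · exact absurd rfl hyx
        · exact h
      refine ⟨List.mem_cons_self, hy, ?_⟩
      rw [List.idxOf_cons_self, List.idxOf_cons_ne _ (Ne.symm hyx)]
      omega
    · rintro ⟨hx, h⟩
      by_contra hax
      have hc := (h a (List.mem_cons_self) (fun e => hax e)).2.2
      have h0 : (a :: t).idxOf a = 0 := List.idxOf_cons_self
      omega

lemma cord_pair {x y : α} (h : x ≠ y) {u v : α} :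
    COrd [x, y] u v ↔ u = x ∧ v = y := by
  constructor
  · rintro ⟨hu, hv, hlt⟩
    simp only [List.mem_cons, List.mem_singleton, List.not_mem_nil, or_false] at hu hv
    rcases hu with rfl | rfl <;> rcases hv with rfl | rfl
    · omega
    · exact ⟨rfl, rfl⟩
    · rw [List.idxOf_cons_self, List.idxOf_cons_ne _ h] at hlt
      omega
    · omega
  · rintro ⟨rfl, rfl⟩
    refine ⟨by simp, by simp, ?_⟩
    rw [List.idxOf_cons_self, List.idxOf_cons_ne _ h]
    omega

lemma last3_char {l : List α} (hl : l.Nodup) (h3 : l.length = 3) {x : α} :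
    l[2]? = some x ↔ x ∈ l ∧ ∀ y ∈ l, y ≠ x → COrd l y x := by
  obtain ⟨p, q, s, rfl⟩ := List.length_eq_three.1 h3
  have hpq : p ≠ q := by simp at hl; tauto
  have hps : p ≠ s := by simp at hl; tauto
  have hqs : q ≠ s := by simp at hl; tauto
  have c1 : COrd [p, q, s] p q := ⟨by simp, by simp, by
    rw [List.idxOf_cons_self, List.idxOf_cons_ne _ hpq, List.idxOf_cons_self]; omega⟩
  have c2 : COrd [p, q, s] p s := ⟨by simp, by simp, by
    rw [List.idxOf_cons_self, List.idxOf_cons_ne _ hps, List.idxOf_cons_ne _ hqs,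
      List.idxOf_cons_self]; omega⟩
  have c3 : COrd [p, q, s] q s := ⟨by simp, by simp, by
    rw [List.idxOf_cons_ne _ hpq, List.idxOf_cons_self,
      List.idxOf_cons_ne _ hps, List.idxOf_cons_ne _ hqs, List.idxOf_cons_self]; omega⟩
  simp only [List.getElem?_cons_succ, List.getElem?_cons_zero, Option.some.injEq]
  constructor
  · rintro rfl
    refine ⟨by simp, ?_⟩
    intro y hy hyx
    simp only [List.mem_cons, List.mem_singleton, List.not_mem_nil, or_false] at hy
    rcases hy with rfl | rfl | rfl
    · exact c2
    · exact c3
    · exact absurd rfl hyx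
  · rintro ⟨hx, h⟩
    simp only [List.mem_cons, List.mem_singleton, List.not_mem_nil, or_false] at hx
    rcases hx with rfl | rfl | rfl
    · exact absurd (h q (by simp) hpq.symm) (fun hc => c1.asymm hc)
    · exact absurd (h s (by simp) hqs.symm) (fun hc => c3.asymm hc)
    · rfl

lemma cord_append {s t : List α} (h : (s ++ t).Nodup) {u v : α} :
    COrd (s ++ t) u v ↔ COrd s u v ∨ COrd t u v ∨ (u ∈ s ∧ v ∈ t) := by
  have hs : s.Nodup := h.of_append_left
  have ht : t.Nodup := h.of_append_right
  rw [← pair_sublist_iff_cord h, ← pair_sublist_iff_cord hs, ← pair_sublist_iff_cord ht]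
  constructor
  · intro hsub
    obtain ⟨l₁, l₂, heq, h1, h2⟩ := List.sublist_append_iff.1 hsub
    rcases l₁ with _ | ⟨a, _ | ⟨b, _ | ⟨c, l'⟩⟩⟩
    · right; left
      have hl2 : l₂ = [u, v] := by simpa using heq.symm
      rw [← hl2]; exact h2
    · right; right
      have hau : a = u ∧ l₂ = [v] := by
        simp only [List.cons_append, List.nil_append, List.cons.injEq] at heq
        exact ⟨heq.1.symm, heq.2.symm⟩
      obtain ⟨rfl, rfl⟩ := hau
      exact ⟨(List.singleton_sublist).1 h1, (List.singleton_sublist).1 h2⟩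
    · left
      have hab : a = u ∧ b = v ∧ l₂ = [] := by
        simp only [List.cons_append, List.nil_append, List.cons.injEq] at heq
        exact ⟨heq.1.symm, heq.2.1.symm, heq.2.2.symm⟩
      obtain ⟨rfl, rfl, rfl⟩ := hab
      exact h1
    · exfalso
      have := congrArg List.length heq
      simp at this
  · rintro (h1 | h1 | ⟨h1, h2⟩)
    · exact h1.trans (List.sublist_append_left s t)
    · exact h1.trans (List.sublist_append_right s t)
    · exact List.Sublist.append (List.singleton_sublist.2 h1) (List.singleton_sublist.2 h2)

lemma cord_swap {l₁ l₂ : List α} {x y : α}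
    (hR : (l₁ ++ x :: y :: l₂).Nodup) {u v : α}
    (h1 : ¬(u = x ∧ v = y)) (h2 : ¬(u = y ∧ v = x)) :
    COrd (l₁ ++ y :: x :: l₂) u v ↔ COrd (l₁ ++ x :: y :: l₂) u v := by
  have hW : (l₁ ++ y :: x :: l₂).Nodup := by
    have hp : (l₁ ++ x :: y :: l₂).Perm (l₁ ++ y :: x :: l₂) :=
      List.Perm.append_left l₁ (List.Perm.swap y x l₂)
    exact hp.nodup hR
  have hxl : x ∉ y :: l₂ := by
    have := hR.of_append_right
    rcases List.nodup_cons.1 this with ⟨hx, h⟩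
    simp only [List.mem_cons] at hx
    simp only [List.mem_cons]
    push_neg
    exact ⟨fun he => hx (Or.inl he), fun hm => hx (Or.inr hm)⟩
  have hyl : y ∉ x :: l₂ := by
    have h' := hW.of_append_right
    rcases List.nodup_cons.1 h' with ⟨hy, h⟩
    exact hy
  have hy2 : y ∉ l₂ := fun hm => hyl (List.mem_cons_of_mem _ hm)
  have hx2 : x ∉ l₂ := fun hm => hxl (List.mem_cons_of_mem _ hm)
  rw [cord_append hR, cord_append hW, cord_cons_iff hxl, cord_cons_iff hyl,
    cord_cons_iff hx2, cord_cons_iff hy2]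
  have hxy : x ≠ y := fun he => hxl (he ▸ List.mem_cons_self)
  constructor
  · rintro (h | (⟨rfl, hv⟩ | (⟨rfl, hv⟩ | h)) | ⟨hu, hv⟩)
    · exact Or.inl h
    · rcases List.mem_cons.1 hv with rfl | hv'
      · exact absurd ⟨rfl, rfl⟩ h2
      · exact Or.inr (Or.inl (Or.inr (Or.inl ⟨rfl, hv'⟩)))
    · exact Or.inr (Or.inl (Or.inl ⟨rfl, List.mem_cons_of_mem _ hv⟩))
    · exact Or.inr (Or.inl (Or.inr (Or.inr h)))
    · refine Or.inr (Or.inr ⟨hu, ?_⟩)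
      simp only [List.mem_cons] at hv ⊢
      tauto
  · rintro (h | (⟨rfl, hv⟩ | (⟨rfl, hv⟩ | h)) | ⟨hu, hv⟩)
    · exact Or.inl h
    · rcases List.mem_cons.1 hv with rfl | hv'
      · exact absurd ⟨rfl, rfl⟩ h1
      · exact Or.inr (Or.inl (Or.inr (Or.inl ⟨rfl, hv'⟩)))
    · exact Or.inr (Or.inl (Or.inl ⟨rfl, List.mem_cons_of_mem _ hv⟩))
    · exact Or.inr (Or.inl (Or.inr (Or.inr h)))
    · refine Or.inr (Or.inr ⟨hu, ?_⟩)
      simp only [List.mem_cons] at hv ⊢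
      tauto

lemma cord_swap_pair {l₁ l₂ : List α} {x y : α} (hR : (l₁ ++ x :: y :: l₂).Nodup) :
    COrd (l₁ ++ x :: y :: l₂) x y := by
  rw [← pair_sublist_iff_cord hR]
  refine List.Sublist.trans ?_ (List.sublist_append_right l₁ _)
  exact (List.Sublist.cons₂ x (List.Sublist.cons₂ y (List.nil_sublist l₂)))

/-- extensionality: two nodup lists with the same elements and compatible orders are equal -/
lemma eq_of_cord_subset {R T : List α} (hR : R.Nodup) (hT : T.Nodup)
    (hfin : R.toFinset = T.toFinset)
    (h : ∀ u v, COrd R u v → COrd T u v) : R = T := by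
  induction R generalizing T with
  | nil =>
    cases T with
    | nil => rfl
    | cons b t =>
      exfalso
      have hb : b ∈ ([] : List α).toFinset := hfin ▸ (by simp)
      simp at hb
  | cons a R' ih =>
    have haR : a ∉ R' := (List.nodup_cons.1 hR).1
    cases T with
    | nil => simp at hfin
    | cons b T' =>
      have hab : a = b := by
        by_contra hab
        have haT : a ∈ b :: T' := by
          have : a ∈ (b :: T').toFinset := hfin ▸ (by simp)
          simpa using this
        have hbR : b ∈ a :: R' := by
          have : b ∈ (a :: R').toFinset := hfin ▸ (by simp)
          simpa using this
        have hbR' : b ∈ R' := by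
          rcases List.mem_cons.1 hbR with he | h'
          · exact absurd he.symm hab
          · exact h'
        have hord : COrd (a :: R') a b := by
          refine ⟨List.mem_cons_self, List.mem_cons_of_mem _ hbR', ?_⟩
          rw [List.idxOf_cons_self, List.idxOf_cons_ne _ (fun he => hab he)]
          omega
        have := (h a b hord).2.2
        have hb0 : (b :: T').idxOf b = 0 := List.idxOf_cons_self
        omega
      subst hab
      have hbT : a ∉ T' := (List.nodup_cons.1 hT).1
      have hfin' : R'.toFinset = T'.toFinset := by
        ext e
        constructor
        · intro he
          have heR : e ∈ a :: R' := List.mem_cons_of_mem _ (List.mem_toFinset.1 he)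
          have : e ∈ (a :: T').toFinset := hfin ▸ (by simpa using heR)
          have heT : e ∈ a :: T' := by simpa using this
          have hea : e ≠ a := fun hea => haR (by rw [← hea]; exact List.mem_toFinset.1 he)
          rcases List.mem_cons.1 heT with he' | h'
          · exact absurd he' hea
          · exact List.mem_toFinset.2 h'
        · intro he
          have heT : e ∈ a :: T' := List.mem_cons_of_mem _ (List.mem_toFinset.1 he)
          have : e ∈ (a :: R').toFinset := hfin ▸ (by simpa using heT)
          have heR : e ∈ a :: R' := by simpa using this
          have hea : e ≠ a := fun hea => hbT (by rw [← hea]; exact List.mem_toFinset.1 he)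
          rcases List.mem_cons.1 heR with he' | h'
          · exact absurd he' hea
          · exact List.mem_toFinset.2 h'
      refine congrArg _ (ih (List.nodup_cons.1 hR).2 (List.nodup_cons.1 hT).2 hfin' ?_)
      intro u v huv
      have hu' : u ∈ R' := huv.mem1
      have hv' : v ∈ R' := huv.mem2
      have hlift : COrd (a :: R') u v := by
        refine ⟨List.mem_cons_of_mem _ hu', List.mem_cons_of_mem _ hv', ?_⟩
        rw [List.idxOf_cons_ne _ (fun he => haR (by rw [he]; exact hu')),
          List.idxOf_cons_ne _ (fun he => haR (by rw [he]; exact hv'))]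
        have := huv.2.2
        omega
      have hT2 := h u v hlift
      have hu2 : u ∈ T' := by
        have hue : u ≠ a := fun he => haR (by rw [← he]; exact hu')
        rcases List.mem_cons.1 hT2.mem1 with he | h'
        · exact absurd he hue
        · exact h'
      have hv2 : v ∈ T' := by
        have hve : v ≠ a := fun he => haR (by rw [← he]; exact hv')
        rcases List.mem_cons.1 hT2.mem2 with he | h'
        · exact absurd he hve
        · exact h'
      refine ⟨hu2, hv2, ?_⟩
      have := hT2.2.2
      rw [List.idxOf_cons_ne _ (fun he => haR (by rw [he]; exact hu')),
        List.idxOf_cons_ne _ (fun he => haR (by rw [he]; exact hv'))] at this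
      omega

/-! ### distance machinery -/

instance decCOrd (l : List α) (u v : α) : Decidable (COrd l u v) := by
  unfold COrd; exact inferInstance

/-- the set of discordant (ordered) pairs -/
def dset (R T : List α) : Finset (α × α) :=
  (R.toFinset ×ˢ R.toFinset).filter (fun p => COrd R p.1 p.2 ∧ COrd T p.2 p.1)

/-- the Kemeny distance -/
def cdist (R T : List α) : ℕ := (dset R T).card

lemma mem_dset {R T : List α} {p : α × α} :
    p ∈ dset R T ↔ COrd R p.1 p.2 ∧ COrd T p.2 p.1 := by
  constructor
  · intro h
    exact (Finset.mem_filter.1 h).2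
  · intro h
    refine Finset.mem_filter.2 ⟨Finset.mem_product.2 ⟨?_, ?_⟩, h⟩
    · exact List.mem_toFinset.2 h.1.mem1
    · exact List.mem_toFinset.2 h.1.mem2

lemma linord_of_perm {A : Finset α} {R W : List α} (h : IsLinOrd A R) (hp : R.Perm W) :
    IsLinOrd A W := ⟨hp.nodup h.1, by rw [← List.toFinset_eq_of_perm _ _ hp]; exact h.2⟩

lemma mem_of_linord_mem {A : Finset α} {R : List α} (h : IsLinOrd A R) {u : α} :
    u ∈ R ↔ u ∈ A := by rw [← h.2]; exact List.mem_toFinset.symm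

lemma cdist_self (R : List α) : cdist R R = 0 := by
  rw [cdist, Finset.card_eq_zero]
  ext p
  simp only [mem_dset, Finset.notMem_empty, iff_false]
  rintro ⟨h1, h2⟩
  exact h1.asymm h2

lemma cdist_eq_zero_iff {A : Finset α} {R T : List α} (hR : IsLinOrd A R)
    (hT : IsLinOrd A T) : cdist R T = 0 ↔ R = T := by
  constructor
  · intro h
    rw [cdist, Finset.card_eq_zero] at h
    apply eq_of_cord_subset hR.1 hT.1 (hR.2.trans hT.2.symm)
    intro u v huv
    have hu : u ∈ T := (mem_of_linord_mem hT).2 ((mem_of_linord_mem hR).1 huv.mem1)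
    have hv : v ∈ T := (mem_of_linord_mem hT).2 ((mem_of_linord_mem hR).1 huv.mem2)
    rcases cord_total hu hv huv.ne with h1 | h1
    · exact h1
    · exfalso
      have : (u, v) ∈ dset R T := mem_dset.2 ⟨huv, h1⟩
      rw [h] at this
      exact absurd this (Finset.notMem_empty _)
  · rintro rfl
    exact cdist_self R

lemma cdist_triangle {A : Finset α} {R m T : List α} (hm : IsLinOrd A m)
    (hR : IsLinOrd A R) : cdist R T ≤ cdist R m + cdist m T := by
  have hsub : dset R T ⊆ dset R m ∪ dset m T := by
    intro p hp
    rcases mem_dset.1 hp with ⟨h1, h2⟩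
    have hu : p.1 ∈ m := (mem_of_linord_mem hm).2 ((mem_of_linord_mem hR).1 h1.mem1)
    have hv : p.2 ∈ m := (mem_of_linord_mem hm).2 ((mem_of_linord_mem hR).1 h1.mem2)
    rcases cord_total hu hv h1.ne with h3 | h3
    · exact Finset.mem_union_right _ (mem_dset.2 ⟨h3, h2⟩)
    · exact Finset.mem_union_left _ (mem_dset.2 ⟨h1, h3⟩)
  calc (dset R T).card ≤ (dset R m ∪ dset m T).card := Finset.card_le_card hsub
    _ ≤ _ := Finset.card_union_le _ _

/-- `m` is (Kemeny) between `R` and `T`. -/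
def Btwn (m R T : List α) : Prop := ∀ u v, COrd R u v → COrd T u v → COrd m u v

lemma cdist_add_of_btwn {A : Finset α} {R m T : List α} (hR : IsLinOrd A R)
    (hm : IsLinOrd A m) (hT : IsLinOrd A T) (hb : Btwn m R T) :
    cdist R m + cdist m T = cdist R T := by
  have he : dset R m ∪ dset m T = dset R T := by
    ext p
    simp only [Finset.mem_union, mem_dset]
    constructor
    · rintro (⟨h1, h2⟩ | ⟨h1, h2⟩)
      · refine ⟨h1, ?_⟩
        have hu : p.2 ∈ T := (mem_of_linord_mem hT).2 ((mem_of_linord_mem hR).1 h1.mem2)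
        have hv : p.1 ∈ T := (mem_of_linord_mem hT).2 ((mem_of_linord_mem hR).1 h1.mem1)
        rcases cord_total hv hu h1.ne with h3 | h3
        · exact absurd (hb _ _ h1 h3) (fun hc => hc.asymm h2)
        · exact h3
      · refine ⟨?_, h2⟩
        have hu : p.1 ∈ R := (mem_of_linord_mem hR).2 ((mem_of_linord_mem hm).1 h1.mem1)
        have hv : p.2 ∈ R := (mem_of_linord_mem hR).2 ((mem_of_linord_mem hm).1 h1.mem2)
        rcases cord_total hu hv h1.ne with h3 | h3
        · exact h3
        · exact absurd (hb _ _ h3 h2) (fun hc => hc.asymm h1)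
    · rintro ⟨h1, h2⟩
      have hu : p.1 ∈ m := (mem_of_linord_mem hm).2 ((mem_of_linord_mem hR).1 h1.mem1)
      have hv : p.2 ∈ m := (mem_of_linord_mem hm).2 ((mem_of_linord_mem hR).1 h1.mem2)
      rcases cord_total hu hv h1.ne with h3 | h3
      · exact Or.inr ⟨h3, h2⟩
      · exact Or.inl ⟨h1, h3⟩
  have hd : Disjoint (dset R m) (dset m T) := by
    rw [Finset.disjoint_left]
    intro p hp hq
    exact (mem_dset.1 hq).1.asymm (mem_dset.1 hp).2
  rw [cdist, cdist, cdist, ← he, Finset.card_union_of_disjoint hd]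

/-! ### swaps -/

lemma swap_perm (l₁ l₂ : List α) (x y : α) :
    (l₁ ++ x :: y :: l₂).Perm (l₁ ++ y :: x :: l₂) :=
  List.Perm.append_left l₁ (List.Perm.swap y x l₂)

lemma dset_swap {l₁ l₂ : List α} {x y : α} (hR : (l₁ ++ x :: y :: l₂).Nodup) :
    dset (l₁ ++ x :: y :: l₂) (l₁ ++ y :: x :: l₂) = {(x, y)} := by
  have hW : (l₁ ++ y :: x :: l₂).Nodup := (swap_perm l₁ l₂ x y).nodup hR
  have hRxy : COrd (l₁ ++ x :: y :: l₂) x y := cord_swap_pair hR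
  have hWyx : COrd (l₁ ++ y :: x :: l₂) y x := cord_swap_pair hW
  ext p
  simp only [mem_dset, Finset.mem_singleton]
  constructor
  · rintro ⟨h1, h2⟩
    by_contra hne
    have hne1 : ¬(p.1 = x ∧ p.2 = y) := by
      intro hc
      apply hne
      rw [Prod.ext_iff]
      exact hc
    rcases Classical.em (p.1 = y ∧ p.2 = x) with hc | hc
    · rcases hc with ⟨e1, e2⟩
      rw [e1, e2] at h1
      exact hRxy.asymm h1
    · have hiff := cord_swap hR (u := p.2) (v := p.1)
        (by rintro ⟨e1, e2⟩; exact hc ⟨e2, e1⟩) (by rintro ⟨e1, e2⟩; exact hne1 ⟨e2, e1⟩)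
      exact h1.asymm (hiff.1 h2)
  · intro hp
    rw [hp]
    exact ⟨hRxy, hWyx⟩

lemma cdist_swap {l₁ l₂ : List α} {x y : α} (hR : (l₁ ++ x :: y :: l₂).Nodup) :
    cdist (l₁ ++ x :: y :: l₂) (l₁ ++ y :: x :: l₂) = 1 := by
  rw [cdist, dset_swap hR]; simp

lemma btwn_swap {l₁ l₂ : List α} {x y : α} {T : List α}
    (hR : (l₁ ++ x :: y :: l₂).Nodup) (hdisc : COrd T y x) :
    Btwn (l₁ ++ y :: x :: l₂) (l₁ ++ x :: y :: l₂) T := by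
  intro u v h1 h2
  have hne1 : ¬(u = x ∧ v = y) := by
    rintro ⟨rfl, rfl⟩
    exact hdisc.asymm h2
  have hne2 : ¬(u = y ∧ v = x) := by
    rintro ⟨rfl, rfl⟩
    exact (cord_swap_pair hR).asymm h1
  exact (cord_swap hR hne1 hne2).2 h1

lemma alike_swap {l₁ l₂ : List α} {x y : α} (hR : (l₁ ++ x :: y :: l₂).Nodup) :
    Alike (l₁ ++ x :: y :: l₂) (l₁ ++ y :: x :: l₂) := by
  refine ⟨l₁, l₂, x, y, ?_, rfl, rfl⟩
  intro he
  subst he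
  have := hR.of_append_right
  rcases List.nodup_cons.1 this with ⟨hx, _⟩
  exact hx (List.mem_cons_self)

lemma alike_cdist_one {R W : List α} (hR : R.Nodup) (hA : Alike R W) : cdist R W = 1 := by
  obtain ⟨l₁, l₂, x, y, hxy, rfl, rfl⟩ := hA
  exact cdist_swap hR

/-! ### paths -/

lemma path_length_ge {A : Finset α} (P : List (List α)) (R T : List α)
    (hP : IsPath A P R T) : cdist R T + 1 ≤ P.length := by
  induction P generalizing R with
  | nil => exact absurd rfl hP.1.1
  | cons a t ih =>
    cases t with
    | nil =>
      have ha : a = R := by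
        have := hP.2.1
        simpa using this
      have ha2 : a = T := by
        have := hP.2.2
        simpa [List.getLast?] using this
      subst ha
      rw [← ha2, cdist_self]
      simp
    | cons b t' =>
      have hab : Alike a b := (List.isChain_cons_cons.1 hP.1.2.2).1
      have haR : a = R := by
        have := hP.2.1
        simpa using this
      subst haR
      have hP' : IsPath A (b :: t') b T := by
        refine ⟨⟨by simp, ?_, (List.isChain_cons_cons.1 hP.1.2.2).2⟩, by simp, ?_⟩
        · intro l hl
          exact hP.1.2.1 l (List.mem_cons_of_mem _ hl)
        · rw [← hP.2.2]
          exact List.getLast?_cons_cons.symm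
      have hIH := ih b hP'
      have hlinR : IsLinOrd A a := hP.1.2.1 a (by simp)
      have hlinb : IsLinOrd A b := hP.1.2.1 b (by simp)
      have htri : cdist a T ≤ cdist a b + cdist b T := cdist_triangle hlinb hlinR
      have h1 : cdist a b = 1 := alike_cdist_one hlinR.1 hab
      simp only [List.length_cons] at hIH ⊢
      omega

/-! ### restrictions and never-conditions -/

lemma nevercond_iff {D : Set (List α)} {B : Finset α} {x : α} {k : Fin 3} :
    NeverCond (restrictDom D B) x k ↔ ∀ O ∈ D, (restrictOrd O B)[(k : ℕ)]? ≠ some x := by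
  constructor
  · intro h O hO
    exact h _ ⟨O, hO, rfl⟩
  · rintro h l ⟨O, hO, rfl⟩
    exact h O hO

lemma restr_nodup {l : List α} (h : l.Nodup) (B : Finset α) : (restrictOrd l B).Nodup :=
  h.filter _

lemma restr_toFinset {l : List α} (B : Finset α) :
    (restrictOrd l B).toFinset = l.toFinset ∩ B := by
  rw [restrictOrd, List.toFinset_filter]
  ext e
  simp

lemma restr_length_three {A B : Finset α} {l : List α} (hlin : IsLinOrd A l)
    (hB : B ⊆ A) (h3 : B.card = 3) : (restrictOrd l B).length = 3 := by
  have hnd := restr_nodup hlin.1 B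
  have := List.toFinset_card_of_nodup hnd
  rw [restr_toFinset, hlin.2, Finset.inter_eq_right.2 hB] at this
  omega

lemma restr_top_iff {A B : Finset α} {l : List α} {x : α} (hlin : IsLinOrd A l)
    (hB : B ⊆ A) :
    (restrictOrd l B)[0]? = some x ↔ x ∈ B ∧ ∀ y ∈ B, y ≠ x → COrd l x y := by
  rw [head_char]
  constructor
  · rintro ⟨hx, h⟩
    have hx' := mem_restr.1 hx
    refine ⟨hx'.2, ?_⟩
    intro y hy hyx
    have hy' : y ∈ restrictOrd l B :=
      mem_restr.2 ⟨(mem_of_linord_mem hlin).2 (hB hy), hy⟩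
    exact ((cord_restr hlin.1).1 (h y hy' hyx)).1
  · rintro ⟨hx, h⟩
    have hxl : x ∈ l := (mem_of_linord_mem hlin).2 (hB hx)
    refine ⟨mem_restr.2 ⟨hxl, hx⟩, ?_⟩
    intro y hy hyx
    have hy' := mem_restr.1 hy
    exact (cord_restr hlin.1).2 ⟨h y hy'.2 hyx, hx, hy'.2⟩

lemma restr_bot_iff {A B : Finset α} {l : List α} {x : α} (hlin : IsLinOrd A l)
    (hB : B ⊆ A) (h3 : B.card = 3) :
    (restrictOrd l B)[2]? = some x ↔ x ∈ B ∧ ∀ y ∈ B, y ≠ x → COrd l y x := by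
  rw [last3_char (restr_nodup hlin.1 B) (restr_length_three hlin hB h3)]
  constructor
  · rintro ⟨hx, h⟩
    have hx' := mem_restr.1 hx
    refine ⟨hx'.2, ?_⟩
    intro y hy hyx
    have hy' : y ∈ restrictOrd l B :=
      mem_restr.2 ⟨(mem_of_linord_mem hlin).2 (hB hy), hy⟩
    exact ((cord_restr hlin.1).1 (h y hy' hyx)).1
  · rintro ⟨hx, h⟩
    have hxl : x ∈ l := (mem_of_linord_mem hlin).2 (hB hx)
    refine ⟨mem_restr.2 ⟨hxl, hx⟩, ?_⟩
    intro y hy hyx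
    have hy' := mem_restr.1 hy
    exact (cord_restr hlin.1).2 ⟨h y hy'.2 hyx, hy'.2, hx⟩

lemma never_top_elim {D : Set (List α)} {A B : Finset α} {x : α}
    (hN : NeverCond (restrictDom D B) x 0) {O : List α} (hO : O ∈ D)
    (hlin : IsLinOrd A O) (hB : B ⊆ A) (hx : x ∈ B) :
    ∃ y ∈ B, y ≠ x ∧ COrd O y x := by
  have hne := nevercond_iff.1 hN O hO
  by_contra hcon
  push_neg at hcon
  apply hne
  show (restrictOrd O B)[0]? = some x
  refine (restr_top_iff hlin hB).2 ⟨hx, ?_⟩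
  intro y hy hyx
  have hnc := hcon y hy hyx
  have hyO : y ∈ O := (mem_of_linord_mem hlin).2 (hB hy)
  have hxO : x ∈ O := (mem_of_linord_mem hlin).2 (hB hx)
  rcases cord_total hxO hyO (fun he => hyx he.symm) with h | h
  · exact h
  · exact absurd h hnc

lemma never_bot_elim {D : Set (List α)} {A B : Finset α} {x : α}
    (hN : NeverCond (restrictDom D B) x 2) {O : List α} (hO : O ∈ D)
    (hlin : IsLinOrd A O) (hB : B ⊆ A) (h3 : B.card = 3) (hx : x ∈ B) :
    ∃ y ∈ B, y ≠ x ∧ COrd O x y := by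
  have hne := nevercond_iff.1 hN O hO
  by_contra hcon
  push_neg at hcon
  apply hne
  show (restrictOrd O B)[2]? = some x
  refine (restr_bot_iff hlin hB h3).2 ⟨hx, ?_⟩
  intro y hy hyx
  have hnc := hcon y hy hyx
  have hyO : y ∈ O := (mem_of_linord_mem hlin).2 (hB hy)
  have hxO : x ∈ O := (mem_of_linord_mem hlin).2 (hB hx)
  rcases cord_total hyO hxO hyx with h | h
  · exact h
  · exact absurd h hnc

/-! ### insertion sort w.r.t. a local relation -/

def ins (r : α → α → Bool) (a : α) : List α → List α
  | [] => [a]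
  | b :: t => if r a b then a :: b :: t else b :: ins r a t

def isort (r : α → α → Bool) : List α → List α
  | [] => []
  | a :: t => ins r a (isort r t)

lemma ins_perm (r : α → α → Bool) (a : α) (l : List α) : (ins r a l).Perm (a :: l) := by
  induction l with
  | nil => simp [ins]
  | cons b t ih =>
    rw [ins]
    by_cases h : r a b
    · rw [if_pos h]
    · rw [if_neg h]
      exact (ih.cons b).trans (List.Perm.swap a b t)

lemma isort_perm (r : α → α → Bool) (l : List α) : (isort r l).Perm l := by
  induction l with
  | nil => simp [isort]
  | cons a t ih =>
    rw [isort]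
    exact (ins_perm r a (isort r t)).trans (ih.cons a)

lemma pairwise_ins (r : α → α → Bool) (a : α) (l : List α)
    (htot : ∀ b ∈ l, r a b = true ∨ r b a = true)
    (htr : ∀ u ∈ a :: l, ∀ v ∈ a :: l, ∀ w ∈ a :: l,
      r u v = true → r v w = true → r u w = true)
    (hp : l.Pairwise (fun u v => r u v = true)) :
    (ins r a l).Pairwise (fun u v => r u v = true) := by
  induction l with
  | nil => simp [ins]
  | cons b t ih =>
    rw [ins]
    rcases List.pairwise_cons.1 hp with ⟨hb, ht⟩
    by_cases h : r a b
    · rw [if_pos h]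
      refine List.pairwise_cons.2 ⟨?_, hp⟩
      intro c hc
      rcases List.mem_cons.1 hc with rfl | hct
      · exact h
      · exact htr a (by simp) b (by simp) c (by simp [hct]) h (hb c hct)
    · rw [if_neg h]
      refine List.pairwise_cons.2 ⟨?_, ?_⟩
      · intro c hc
        have hc' := (ins_perm r a t).mem_iff.1 hc
        rcases List.mem_cons.1 hc' with rfl | hct
        · rcases htot b (by simp) with h1 | h1
          · exact absurd h1 (by simpa using h)
          · exact h1
        · exact hb c hct
      · refine ih ?_ ?_ ht
        · intro c hc
          exact htot c (List.mem_cons_of_mem _ hc)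
        · intro u hu v hv w hw
          have f : ∀ z, z ∈ a :: t → z ∈ a :: b :: t := by
            intro z hz
            rcases List.mem_cons.1 hz with rfl | hz
            · simp
            · simp [hz]
          exact htr u (f u hu) v (f v hv) w (f w hw)

lemma pairwise_isort (r : α → α → Bool) (l : List α)
    (htot : ∀ u ∈ l, ∀ v ∈ l, u ≠ v → r u v = true ∨ r v u = true)
    (htr : ∀ u ∈ l, ∀ v ∈ l, ∀ w ∈ l, r u v = true → r v w = true → r u w = true)
    (hrefl : ∀ u ∈ l, r u u = true) :
    (isort r l).Pairwise (fun u v => r u v = true) := by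
  induction l with
  | nil => simp [isort]
  | cons a t ih =>
    rw [isort]
    have hmem : ∀ z, z ∈ isort r t → z ∈ t := fun z hz => (isort_perm r t).mem_iff.1 hz
    refine pairwise_ins r a (isort r t) ?_ ?_ ?_
    · intro b hb
      have hbt := hmem b hb
      rcases eq_or_ne a b with rfl | hab
      · exact Or.inl (hrefl a (by simp))
      · rcases htot a (by simp) b (by simp [hbt]) hab with h | h
        · exact Or.inl h
        · exact Or.inr h
    · intro u hu v hv w hw
      have f : ∀ z, z ∈ a :: isort r t → z ∈ a :: t := by
        intro z hz
        rcases List.mem_cons.1 hz with rfl | hz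
        · simp
        · simp [hmem z hz]
      have fu := f u hu
      have fv := f v hv
      have fw := f w hw
      exact htr u fu v fv w fw
    · refine ih ?_ ?_ ?_
      · intro u hu v hv huv
        exact htot u (by simp [hu]) v (by simp [hv]) huv
      · intro u hu v hv w hw
        exact htr u (by simp [hu]) v (by simp [hv]) w (by simp [hw])
      · intro u hu
        exact hrefl u (by simp [hu])

/-! ### majority of three orders -/

def Maj (R T V : List α) (u v : α) : Prop :=
  (COrd R u v ∧ COrd T u v) ∨ (COrd R u v ∧ COrd V u v) ∨ (COrd T u v ∧ COrd V u v)

lemma maj_mono {R T V : List α} {u v a b : α}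
    (hf : ∀ O, (O = R ∨ O = T ∨ O = V) → COrd O u v → COrd O a b) :
    Maj R T V u v → Maj R T V a b := by
  rintro (⟨h1, h2⟩ | ⟨h1, h2⟩ | ⟨h1, h2⟩)
  · exact Or.inl ⟨hf R (Or.inl rfl) h1, hf T (Or.inr (Or.inl rfl)) h2⟩
  · exact Or.inr (Or.inl ⟨hf R (Or.inl rfl) h1, hf V (Or.inr (Or.inr rfl)) h2⟩)
  · exact Or.inr (Or.inr ⟨hf T (Or.inr (Or.inl rfl)) h1, hf V (Or.inr (Or.inr rfl)) h2⟩)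

lemma maj_asymm {R T V : List α} {u v : α} (h1 : Maj R T V u v) (h2 : Maj R T V v u) :
    False := by
  rcases h1 with ⟨a1, a2⟩ | ⟨a1, a2⟩ | ⟨a1, a2⟩ <;>
    rcases h2 with ⟨b1, b2⟩ | ⟨b1, b2⟩ | ⟨b1, b2⟩ <;>
    first
      | exact a1.asymm b1
      | exact a1.asymm b2
      | exact a2.asymm b1
      | exact a2.asymm b2

lemma maj_total {A : Finset α} {R T V : List α} (hR : IsLinOrd A R) (hT : IsLinOrd A T)
    (hV : IsLinOrd A V) {u v : α} (hu : u ∈ A) (hv : v ∈ A) (hne : u ≠ v) :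
    Maj R T V u v ∨ Maj R T V v u := by
  have h1 := cord_total ((mem_of_linord_mem hR).2 hu) ((mem_of_linord_mem hR).2 hv) hne
  have h2 := cord_total ((mem_of_linord_mem hT).2 hu) ((mem_of_linord_mem hT).2 hv) hne
  have h3 := cord_total ((mem_of_linord_mem hV).2 hu) ((mem_of_linord_mem hV).2 hv) hne
  unfold Maj
  tauto

lemma maj_pigeon {R T V : List α} {u v a b : α} (h1 : Maj R T V u v)
    (h2 : Maj R T V a b) :
    ∃ O, (O = R ∨ O = T ∨ O = V) ∧ COrd O u v ∧ COrd O a b := by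
  rcases h1 with ⟨a1, a2⟩ | ⟨a1, a2⟩ | ⟨a1, a2⟩ <;>
    rcases h2 with ⟨b1, b2⟩ | ⟨b1, b2⟩ | ⟨b1, b2⟩ <;>
    first
      | exact ⟨R, Or.inl rfl, a1, b1⟩
      | exact ⟨T, Or.inr (Or.inl rfl), a2, b2⟩
      | exact ⟨T, Or.inr (Or.inl rfl), a2, b1⟩
      | exact ⟨T, Or.inr (Or.inl rfl), a1, b1⟩
      | exact ⟨T, Or.inr (Or.inl rfl), a1, b2⟩
      | exact ⟨V, Or.inr (Or.inr rfl), a2, b2⟩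

/-- Sen's argument, never-top case: a majority cycle `a → b → c → a` is impossible. -/
lemma sen_top {D : Set (List α)} {A B : Finset α} (hlinD : ∀ O ∈ D, IsLinOrd A O)
    {R T V : List α} (hRD : R ∈ D) (hTD : T ∈ D) (hVD : V ∈ D) {a b c : α}
    (hB : B ⊆ A) (haB : a ∈ B) (hab : a ≠ b) (hca : c ≠ a)
    (hN : NeverCond (restrictDom D B) a 0)
    (hBmem : ∀ z ∈ B, z = a ∨ z = b ∨ z = c)
    (h1 : Maj R T V a b) (h2 : Maj R T V b c) (h3 : Maj R T V c a) : False := by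
  have mono : Maj R T V a b → Maj R T V c b := by
    apply maj_mono
    intro O hO hOab
    have hOD : O ∈ D := by rcases hO with rfl | rfl | rfl <;> assumption
    obtain ⟨y, hy, hya, hOya⟩ := never_top_elim hN hOD (hlinD O hOD) hB haB
    rcases hBmem y hy with rfl | rfl | rfl
    · exact absurd rfl hya
    · exact absurd hOya (fun hc' => hc'.asymm hOab)
    · exact hOya.trans' hOab
  exact maj_asymm (mono h1) h2

/-- Sen's argument, never-bottom case. -/
lemma sen_bot {D : Set (List α)} {A B : Finset α} (hlinD : ∀ O ∈ D, IsLinOrd A O)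
    {R T V : List α} (hRD : R ∈ D) (hTD : T ∈ D) (hVD : V ∈ D) {a b c : α}
    (hB : B ⊆ A) (h3c : B.card = 3) (haB : a ∈ B) (hab : a ≠ b) (hca : c ≠ a)
    (hN : NeverCond (restrictDom D B) a 2)
    (hBmem : ∀ z ∈ B, z = a ∨ z = b ∨ z = c)
    (h1 : Maj R T V a b) (h2 : Maj R T V b c) (h3 : Maj R T V c a) : False := by
  have mono : Maj R T V c a → Maj R T V c b := by
    apply maj_mono
    intro O hO hOca
    have hOD : O ∈ D := by rcases hO with rfl | rfl | rfl <;> assumption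
    obtain ⟨y, hy, hya, hOay⟩ := never_bot_elim hN hOD (hlinD O hOD) hB h3c haB
    rcases hBmem y hy with rfl | rfl | rfl
    · exact absurd rfl hya
    · exact hOca.trans' hOay
    · exact absurd hOay (fun hc' => hc'.asymm hOca)
  exact maj_asymm (mono h3) h2

lemma maj_no_cycle {D : Set (List α)} {A : Finset α} (hD : IsPeakPitDomain A D)
    {R T V : List α} (hRD : R ∈ D) (hTD : T ∈ D) (hVD : V ∈ D) {u v w : α}
    (hu : u ∈ A) (hv : v ∈ A) (hw : w ∈ A) (huv : u ≠ v) (hvw : v ≠ w) (hwu : w ≠ u)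
    (h1 : Maj R T V u v) (h2 : Maj R T V v w) (h3 : Maj R T V w u) : False := by
  obtain ⟨x₀, hx₀, hcond⟩ := hD.2 u v w hu hv hw huv (Ne.symm hwu) hvw
  set B : Finset α := {u, v, w} with hBdef
  have hBsub : B ⊆ A := by
    intro z hz
    rcases Finset.mem_insert.1 hz with rfl | hz'
    · exact hu
    rcases Finset.mem_insert.1 hz' with rfl | hz''
    · exact hv
    · rw [Finset.mem_singleton.1 hz'']; exact hw
  have hBmem : ∀ z ∈ B, z = u ∨ z = v ∨ z = w := by
    intro z hz
    rw [hBdef] at hz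
    simpa using hz
  have hcard : B.card = 3 := by
    rw [hBdef]
    rw [Finset.card_insert_of_notMem (by simp [huv, Ne.symm hwu]),
      Finset.card_insert_of_notMem (by simp [hvw]), Finset.card_singleton]
  have huB : u ∈ B := by simp [hBdef]
  have hvB : v ∈ B := by simp [hBdef]
  have hwB : w ∈ B := by simp [hBdef]
  rcases hBmem x₀ hx₀ with rfl | rfl | rfl
  · rcases hcond with hc | hc
    · exact sen_top hD.1 hRD hTD hVD hBsub huB huv hwu hc hBmem h1 h2 h3
    · exact sen_bot hD.1 hRD hTD hVD hBsub hcard huB huv hwu hc hBmem h1 h2 h3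
  · rcases hcond with hc | hc
    · exact sen_top hD.1 hRD hTD hVD hBsub hvB hvw huv hc
        (fun z hz => by rcases hBmem z hz with h | h | h <;> tauto) h2 h3 h1
    · exact sen_bot hD.1 hRD hTD hVD hBsub hcard hvB hvw huv hc
        (fun z hz => by rcases hBmem z hz with h | h | h <;> tauto) h2 h3 h1
  · rcases hcond with hc | hc
    · exact sen_top hD.1 hRD hTD hVD hBsub hwB hwu hvw hc
        (fun z hz => by rcases hBmem z hz with h | h | h <;> tauto) h3 h1 h2
    · exact sen_bot hD.1 hRD hTD hVD hBsub hcard hwB hwu hvw hc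
        (fun z hz => by rcases hBmem z hz with h | h | h <;> tauto) h3 h1 h2

lemma maj_trans {D : Set (List α)} {A : Finset α} (hD : IsPeakPitDomain A D)
    {R T V : List α} (hRD : R ∈ D) (hTD : T ∈ D) (hVD : V ∈ D) {u v w : α}
    (hu : u ∈ A) (hv : v ∈ A) (hw : w ∈ A) (huv : u ≠ v) (hvw : v ≠ w) (hwu : w ≠ u)
    (h1 : Maj R T V u v) (h2 : Maj R T V v w) : Maj R T V u w := by
  rcases maj_total (hD.1 R hRD) (hD.1 T hTD) (hD.1 V hVD) hu hw (Ne.symm hwu) with h | h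
  · exact h
  · exact absurd h (fun h3 => maj_no_cycle hD hRD hTD hVD hu hv hw huv hvw hwu h1 h2 h3)

/-! ### the median order -/

lemma Maj.ne {R T V : List α} {u v : α} (h : Maj R T V u v) : u ≠ v := by
  rcases h with ⟨h, _⟩ | ⟨h, _⟩ | ⟨h, _⟩ <;> exact h.ne

instance decMaj (R T V : List α) (u v : α) : Decidable (Maj R T V u v) := by
  unfold Maj; exact inferInstance

/-- the majority (median) order of three linear orders -/
def majSort (R T V : List α) : List α :=
  isort (fun u v => decide (u = v) || decide (Maj R T V u v)) R

lemma majSort_perm (R T V : List α) : (majSort R T V).Perm R := isort_perm _ R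

lemma majSort_linord {A : Finset α} {R T V : List α} (hR : IsLinOrd A R) :
    IsLinOrd A (majSort R T V) := linord_of_perm hR (majSort_perm R T V).symm

lemma cord_majSort {D : Set (List α)} {A : Finset α} (hD : IsPeakPitDomain A D)
    {R T V : List α} (hRD : R ∈ D) (hTD : T ∈ D) (hVD : V ∈ D) {u v : α}
    (hu : u ∈ A) (hv : v ∈ A) (hne : u ≠ v) :
    COrd (majSort R T V) u v ↔ Maj R T V u v := by
  have hR := hD.1 R hRD
  have hT := hD.1 T hTD
  have hV := hD.1 V hVD
  set r : α → α → Bool := fun a b => decide (a = b) || decide (Maj R T V a b) with hr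
  have hrt : ∀ a b : α, r a b = true ↔ (a = b ∨ Maj R T V a b) := by
    intro a b
    rw [hr]
    simp
  have hpair : (majSort R T V).Pairwise (fun a b => r a b = true) := by
    apply pairwise_isort
    · intro a ha b hb hab
      have haA : a ∈ A := (mem_of_linord_mem hR).1 ha
      have hbA : b ∈ A := (mem_of_linord_mem hR).1 hb
      rcases maj_total hR hT hV haA hbA hab with h | h
      · exact Or.inl ((hrt a b).2 (Or.inr h))
      · exact Or.inr ((hrt b a).2 (Or.inr h))
    · intro a ha b hb c hc h1 h2
      rcases (hrt a b).1 h1 with rfl | hm1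
      · exact h2
      rcases (hrt b c).1 h2 with rfl | hm2
      · exact h1
      rcases eq_or_ne a c with rfl | hac
      · exact (hrt a a).2 (Or.inl rfl)
      have haA : a ∈ A := (mem_of_linord_mem hR).1 ha
      have hbA : b ∈ A := (mem_of_linord_mem hR).1 hb
      have hcA : c ∈ A := (mem_of_linord_mem hR).1 hc
      exact (hrt a c).2 (Or.inr (maj_trans hD hRD hTD hVD haA hbA hcA
        hm1.ne hm2.ne (Ne.symm hac) hm1 hm2))
    · intro a ha
      exact (hrt a a).2 (Or.inl rfl)
  have hmnd : (majSort R T V).Nodup := ((majSort_perm R T V).nodup_iff).2 hR.1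
  have hmemm : ∀ a : α, a ∈ A → a ∈ majSort R T V := by
    intro a haA
    exact ((majSort_perm R T V).mem_iff).2 ((mem_of_linord_mem hR).2 haA)
  have key : ∀ a b : α, a ∈ A → b ∈ A → a ≠ b → Maj R T V a b → COrd (majSort R T V) a b := by
    intro a b haA hbA hab hm
    rcases cord_total (hmemm a haA) (hmemm b hbA) hab with h | h
    · exact h
    · exfalso
      have hsub : List.Sublist [b, a] (majSort R T V) :=
        (pair_sublist_iff_cord hmnd).2 h
      have hp2 : List.Pairwise (fun x y => r x y = true) [b, a] := hpair.sublist hsub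
      have hba : r b a = true := by
        rcases List.pairwise_cons.1 hp2 with ⟨hf, _⟩
        exact hf a (by simp)
      rcases (hrt b a).1 hba with rfl | hmba
      · exact hab rfl
      · exact maj_asymm hm hmba
  constructor
  · intro h
    by_contra hn
    rcases maj_total hR hT hV hu hv hne with h' | h'
    · exact hn h'
    · exact (key v u hv hu (Ne.symm hne) h').asymm h
  · exact key u v hu hv hne

lemma btwn_majSort {D : Set (List α)} {A : Finset α} (hD : IsPeakPitDomain A D)
    {R T V : List α} (hRD : R ∈ D) (hTD : T ∈ D) (hVD : V ∈ D) :
    Btwn (majSort R T V) R T := by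
  intro u v h1 h2
  have hR := hD.1 R hRD
  have hu : u ∈ A := (mem_of_linord_mem hR).1 h1.mem1
  have hv : v ∈ A := (mem_of_linord_mem hR).1 h1.mem2
  exact (cord_majSort hD hRD hTD hVD hu hv h1.ne).2 (Or.inl ⟨h1, h2⟩)

/-- the median order satisfies every never-top condition of the domain -/
lemma majSort_never_top {D : Set (List α)} {A B : Finset α} (hD : IsPeakPitDomain A D)
    {R T V : List α} (hRD : R ∈ D) (hTD : T ∈ D) (hVD : V ∈ D) {x : α}
    (hB : B ⊆ A) (h3 : B.card = 3) (hN : NeverCond (restrictDom D B) x 0) :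
    (restrictOrd (majSort R T V) B)[0]? ≠ some x := by
  intro htop
  have hR := hD.1 R hRD
  have hmlin : IsLinOrd A (majSort R T V) := majSort_linord hR
  rcases (restr_top_iff hmlin hB).1 htop with ⟨hxB, hall⟩
  have h2 : (B.erase x).card = 2 := by rw [Finset.card_erase_of_mem hxB, h3]
  obtain ⟨y1, y2, hy12, hE⟩ := Finset.card_eq_two.1 h2
  have hy1 : y1 ∈ B.erase x := by rw [hE]; simp
  have hy2 : y2 ∈ B.erase x := by rw [hE]; simp
  have hy1B := Finset.mem_of_mem_erase hy1
  have hy2B := Finset.mem_of_mem_erase hy2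
  have hy1x : y1 ≠ x := Finset.ne_of_mem_erase hy1
  have hy2x : y2 ≠ x := Finset.ne_of_mem_erase hy2
  have hm1 : Maj R T V x y1 := (cord_majSort hD hRD hTD hVD (hB hxB) (hB hy1B)
    (Ne.symm hy1x)).1 (hall y1 hy1B hy1x)
  have hm2 : Maj R T V x y2 := (cord_majSort hD hRD hTD hVD (hB hxB) (hB hy2B)
    (Ne.symm hy2x)).1 (hall y2 hy2B hy2x)
  obtain ⟨O, hO, hc1, hc2⟩ := maj_pigeon hm1 hm2
  have hOD : O ∈ D := by rcases hO with rfl | rfl | rfl <;> assumption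
  obtain ⟨y, hy, hyx, hOyx⟩ := never_top_elim hN hOD (hD.1 O hOD) hB hxB
  have hyE : y ∈ B.erase x := Finset.mem_erase.2 ⟨hyx, hy⟩
  rw [hE] at hyE
  rcases Finset.mem_insert.1 hyE with rfl | hyE'
  · exact hOyx.asymm hc1
  · have hye := Finset.mem_singleton.1 hyE'
    subst hye
    exact hOyx.asymm hc2

/-- the median order satisfies every never-bottom condition of the domain -/
lemma majSort_never_bot {D : Set (List α)} {A B : Finset α} (hD : IsPeakPitDomain A D)
    {R T V : List α} (hRD : R ∈ D) (hTD : T ∈ D) (hVD : V ∈ D) {x : α}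
    (hB : B ⊆ A) (h3 : B.card = 3) (hN : NeverCond (restrictDom D B) x 2) :
    (restrictOrd (majSort R T V) B)[2]? ≠ some x := by
  intro hbot
  have hR := hD.1 R hRD
  have hmlin : IsLinOrd A (majSort R T V) := majSort_linord hR
  rcases (restr_bot_iff hmlin hB h3).1 hbot with ⟨hxB, hall⟩
  have h2 : (B.erase x).card = 2 := by rw [Finset.card_erase_of_mem hxB, h3]
  obtain ⟨y1, y2, hy12, hE⟩ := Finset.card_eq_two.1 h2
  have hy1 : y1 ∈ B.erase x := by rw [hE]; simp
  have hy2 : y2 ∈ B.erase x := by rw [hE]; simp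
  have hy1B := Finset.mem_of_mem_erase hy1
  have hy2B := Finset.mem_of_mem_erase hy2
  have hy1x : y1 ≠ x := Finset.ne_of_mem_erase hy1
  have hy2x : y2 ≠ x := Finset.ne_of_mem_erase hy2
  have hm1 : Maj R T V y1 x := (cord_majSort hD hRD hTD hVD (hB hy1B) (hB hxB)
    hy1x).1 (hall y1 hy1B hy1x)
  have hm2 : Maj R T V y2 x := (cord_majSort hD hRD hTD hVD (hB hy2B) (hB hxB)
    hy2x).1 (hall y2 hy2B hy2x)
  obtain ⟨O, hO, hc1, hc2⟩ := maj_pigeon hm1 hm2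
  have hOD : O ∈ D := by rcases hO with rfl | rfl | rfl <;> assumption
  obtain ⟨y, hy, hyx, hOxy⟩ := never_bot_elim hN hOD (hD.1 O hOD) hB h3 hxB
  have hyE : y ∈ B.erase x := Finset.mem_erase.2 ⟨hyx, hy⟩
  rw [hE] at hyE
  rcases Finset.mem_insert.1 hyE with rfl | hyE'
  · exact hOxy.asymm hc1
  · have hye := Finset.mem_singleton.1 hyE'
    subst hye
    exact hOxy.asymm hc2

/-! ### maximality consequences -/

lemma triple_subset {A : Finset α} {a b c : α} (ha : a ∈ A) (hb : b ∈ A) (hc : c ∈ A) :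
    ({a, b, c} : Finset α) ⊆ A := by
  intro z hz
  rcases Finset.mem_insert.1 hz with rfl | hz'
  · exact ha
  rcases Finset.mem_insert.1 hz' with rfl | hz''
  · exact hb
  · rw [Finset.mem_singleton.1 hz'']; exact hc

lemma triple_card {a b c : α} (hab : a ≠ b) (hac : a ≠ c) (hbc : b ≠ c) :
    ({a, b, c} : Finset α).card = 3 := by
  rw [Finset.card_insert_of_notMem (by simp [hab, hac]),
    Finset.card_insert_of_notMem (by simp [hbc]), Finset.card_singleton]

lemma mem_of_union_peakpit {D : Set (List α)} {A : Finset α}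
    (hmax : ∀ D' : Set (List α), IsPeakPitDomain A D' → D ⊆ D' → D = D')
    {E : List α} (hpk : IsPeakPitDomain A (D ∪ {E})) : E ∈ D := by
  have h := hmax _ hpk Set.subset_union_left
  rw [h]
  exact Or.inr rfl

lemma nevercond_union_iff {D : Set (List α)} {E : List α} {B : Finset α} {x : α}
    {k : Fin 3} :
    NeverCond (restrictDom (D ∪ {E}) B) x k ↔
      NeverCond (restrictDom D B) x k ∧ (restrictOrd E B)[(k : ℕ)]? ≠ some x := by
  rw [nevercond_iff, nevercond_iff]
  constructor
  · intro h
    exact ⟨fun O hO => h O (Or.inl hO), h E (Or.inr rfl)⟩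
  · rintro ⟨h1, h2⟩ O hO
    rcases hO with hO | hO
    · exact h1 O hO
    · rw [Set.mem_singleton_iff.1 hO]
      exact h2

lemma majSort_mem {D : Set (List α)} {A : Finset α} (hD : IsPeakPitDomain A D)
    (hmax : ∀ D' : Set (List α), IsPeakPitDomain A D' → D ⊆ D' → D = D')
    {R T V : List α} (hRD : R ∈ D) (hTD : T ∈ D) (hVD : V ∈ D) :
    majSort R T V ∈ D := by
  apply mem_of_union_peakpit hmax
  constructor
  · rintro l (hl | hl)
    · exact hD.1 l hl
    · rw [Set.mem_singleton_iff.1 hl]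
      exact majSort_linord (hD.1 R hRD)
  · intro a b c ha hb hc hab hac hbc
    obtain ⟨x₀, hx₀, hcond⟩ := hD.2 a b c ha hb hc hab hac hbc
    have hBsub : ({a, b, c} : Finset α) ⊆ A := triple_subset ha hb hc
    have hBcard : ({a, b, c} : Finset α).card = 3 := triple_card hab hac hbc
    refine ⟨x₀, hx₀, ?_⟩
    rcases hcond with hc0 | hc2
    · exact Or.inl (nevercond_union_iff.2
        ⟨hc0, majSort_never_top hD hRD hTD hVD hBsub hBcard hc0⟩)
    · exact Or.inr (nevercond_union_iff.2
        ⟨hc2, majSort_never_bot hD hRD hTD hVD hBsub hBcard hc2⟩)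

/-! ### splitting a list at a non-head element -/

lemma split_at_pred {l : List α} {v : α} (hv : v ∈ l) (h0 : l.idxOf v ≠ 0) :
    ∃ l₁ x l₂, l = l₁ ++ x :: v :: l₂ := by
  induction l with
  | nil => exact absurd hv (List.not_mem_nil)
  | cons a t ih =>
    rcases eq_or_ne v a with rfl | hva
    · rw [List.idxOf_cons_self] at h0
      exact absurd rfl h0
    · have hvt : v ∈ t := by
        rcases List.mem_cons.1 hv with he | h
        · exact absurd he hva
        · exact h
      rcases eq_or_ne (t.idxOf v) 0 with ht0 | ht0
      · cases t with
        | nil => exact absurd hvt (List.not_mem_nil)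
        | cons b t' =>
          have hbv : b = v := by
            by_contra hbv
            rw [List.idxOf_cons_ne _ hbv] at ht0
            omega
          subst hbv
          exact ⟨[], a, t', rfl⟩
      · obtain ⟨l₁, x, l₂, heq⟩ := ih hvt ht0
        exact ⟨a :: l₁, x, l₂, by rw [heq]; rfl⟩

lemma restr_swap_eq {l₁ l₂ : List α} {x y : α} {B : Finset α}
    (hnb : ¬(x ∈ B ∧ y ∈ B)) :
    restrictOrd (l₁ ++ y :: x :: l₂) B = restrictOrd (l₁ ++ x :: y :: l₂) B := by
  simp only [restrictOrd, List.filter_append, List.filter_cons]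
  by_cases hx : x ∈ B <;> by_cases hy : y ∈ B
  · exact absurd ⟨hx, hy⟩ hnb
  · simp [hx, hy]
  · simp [hx, hy]
  · simp [hx, hy]

/-- order facts from a decomposition -/
lemma cord_decomp_x_right {l₁ l₂ : List α} {x y w : α}
    (hnd : (l₁ ++ x :: y :: l₂).Nodup) (hw : w ∈ l₂) :
    COrd (l₁ ++ x :: y :: l₂) x w := by
  refine (cord_append hnd).2 (Or.inr (Or.inl ?_))
  have hx : x ∉ y :: l₂ := by
    have h := hnd.of_append_right
    exact (List.nodup_cons.1 h).1
  exact (cord_cons_iff hx).2 (Or.inl ⟨rfl, List.mem_cons_of_mem _ hw⟩)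

lemma cord_decomp_y_right {l₁ l₂ : List α} {x y w : α}
    (hnd : (l₁ ++ x :: y :: l₂).Nodup) (hw : w ∈ l₂) :
    COrd (l₁ ++ x :: y :: l₂) y w := by
  refine (cord_append hnd).2 (Or.inr (Or.inl ?_))
  have hx : x ∉ y :: l₂ := by
    have h := hnd.of_append_right
    exact (List.nodup_cons.1 h).1
  have hy : y ∉ l₂ := by
    have h := (hnd.of_append_right).of_cons
    exact (List.nodup_cons.1 h).1
  exact (cord_cons_iff hx).2 (Or.inr ((cord_cons_iff hy).2 (Or.inl ⟨rfl, hw⟩)))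

lemma cord_decomp_left {l₁ l₂ : List α} {x y w v : α}
    (hnd : (l₁ ++ x :: y :: l₂).Nodup) (hw : w ∈ l₁) (hv : v ∈ x :: y :: l₂) :
    COrd (l₁ ++ x :: y :: l₂) w v :=
  (cord_append hnd).2 (Or.inr (Or.inr ⟨hw, hv⟩))

/-! ### the key lemma: existence of a strict intermediate order -/

lemma exists_strict_between {D : Set (List α)} {A : Finset α}
    (hD : IsPeakPitDomain A D)
    (hmax : ∀ D' : Set (List α), IsPeakPitDomain A D' → D ⊆ D' → D = D')
    {R T : List α} (hRD : R ∈ D) (hTD : T ∈ D) (hne : R ≠ T) :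
    ∃ m ∈ D, Btwn m R T ∧ m ≠ R ∧ (Alike R m ∨ m ≠ T) := by
  classical
  have hRlin := hD.1 R hRD
  have hTlin := hD.1 T hTD
  -- a discordant pair exists
  have hd0 : cdist R T ≠ 0 := fun h => hne ((cdist_eq_zero_iff hRlin hTlin).1 h)
  have hdne : (dset R T).Nonempty := by
    rw [← Finset.card_pos]
    exact Nat.pos_of_ne_zero hd0
  obtain ⟨p0, hp0⟩ := hdne
  rcases mem_dset.1 hp0 with ⟨hp1, hp2⟩
  -- the set of raisable alternatives
  set S : Finset α := A.filter (fun e => ∃ d ∈ A, COrd R d e ∧ COrd T e d) with hSdef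
  have hp02A : p0.2 ∈ A := (mem_of_linord_mem hRlin).1 hp1.mem2
  have hp01A : p0.1 ∈ A := (mem_of_linord_mem hRlin).1 hp1.mem1
  have hSne : p0.2 ∈ S := by
    rw [hSdef]
    exact Finset.mem_filter.2 ⟨hp02A, ⟨p0.1, hp01A, hp1, hp2⟩⟩
  obtain ⟨y, hyS, hymin⟩ := Finset.exists_min_image S (fun e => T.idxOf e) ⟨p0.2, hSne⟩
  rw [hSdef, Finset.mem_filter] at hyS
  obtain ⟨hyA, d, hdA, hdy, hTyd⟩ := hyS
  -- y is the T-maximal raisable alternative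
  have hminT : ∀ z, z ∈ A → (∃ d' ∈ A, COrd R d' z ∧ COrd T z d') → ¬COrd T z y := by
    intro z hz hex hcon
    have hzS : z ∈ S := by
      rw [hSdef]
      exact Finset.mem_filter.2 ⟨hz, hex⟩
    have hle := hymin z hzS
    have hlt := hcon.2.2
    omega
  -- split R just above y
  have hyR : y ∈ R := (mem_of_linord_mem hRlin).2 hyA
  have h0 : R.idxOf y ≠ 0 := by
    have := hdy.2.2
    omega
  obtain ⟨l₁, x, l₂, hRdec⟩ := split_at_pred hyR h0
  have hRnd : (l₁ ++ x :: y :: l₂).Nodup := hRdec ▸ hRlin.1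
  have hcxy : COrd R x y := by rw [hRdec]; exact cord_swap_pair hRnd
  have hxA : x ∈ A := (mem_of_linord_mem hRlin).1 hcxy.mem1
  have hxy : x ≠ y := hcxy.ne
  -- claim 1 : y beats x in T
  have hTyx : COrd T y x := by
    by_contra hcon
    have hxT : x ∈ T := (mem_of_linord_mem hTlin).2 hxA
    have hyT : y ∈ T := (mem_of_linord_mem hTlin).2 hyA
    have hTxy : COrd T x y := by
      rcases cord_total hxT hyT hxy with h | h
      · exact h
      · exact absurd h hcon
    have hdx : COrd R d x := by
      have hdR : d ∈ R := hdy.mem1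
      have hdne2 : d ≠ x := by
        rintro rfl
        exact hTxy.asymm hTyd
      rw [hRdec] at hdR
      rcases List.mem_append.1 hdR with hd1 | hd2
      · rw [hRdec]
        exact cord_decomp_left hRnd hd1 (by simp)
      · rcases List.mem_cons.1 hd2 with rfl | hd3
        · exact absurd rfl hdne2
        rcases List.mem_cons.1 hd3 with rfl | hd4
        · exact absurd rfl hdy.ne
        · exfalso
          have : COrd R y d := by rw [hRdec]; exact cord_decomp_y_right hRnd hd4
          exact this.asymm hdy
    exact hminT x hxA ⟨d, hdA, hdx, hTxy.trans' hTyd⟩ hTxy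
  -- the swapped order W
  have hWnd : (l₁ ++ y :: x :: l₂).Nodup := (swap_perm l₁ l₂ x y).nodup hRnd
  set W : List α := l₁ ++ y :: x :: l₂ with hWdef
  have hpermRW : R.Perm W := by rw [hRdec, hWdef]; exact swap_perm l₁ l₂ x y
  have hWlin : IsLinOrd A W := linord_of_perm hRlin hpermRW
  have hWyx : COrd W y x := cord_swap_pair hWnd
  have hBtwnW : Btwn W R T := by rw [hRdec, hWdef]; exact btwn_swap hRnd hTyx
  have hWneR : W ≠ R := by
    intro he
    rw [he] at hWyx
    exact hcxy.asymm hWyx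
  by_cases hpk : IsPeakPitDomain A (D ∪ {W})
  · exact ⟨W, mem_of_union_peakpit hmax hpk, hBtwnW, hWneR,
      Or.inl (by rw [hRdec, hWdef]; exact alike_swap hRnd)⟩
  -- the failing triple
  have hWall : ∀ l ∈ D ∪ {W}, IsLinOrd A l := by
    rintro l (hl | hl)
    · exact hD.1 l hl
    · rw [Set.mem_singleton_iff.1 hl]
      exact hWlin
  have hex : ∃ a b c : α, a ∈ A ∧ b ∈ A ∧ c ∈ A ∧ a ≠ b ∧ a ≠ c ∧ b ≠ c ∧
      ∀ x₀ ∈ ({a, b, c} : Finset α),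
        ¬NeverCond (restrictDom (D ∪ {W}) {a, b, c}) x₀ 0 ∧
        ¬NeverCond (restrictDom (D ∪ {W}) {a, b, c}) x₀ 2 := by
    by_contra hcon
    push_neg at hcon
    apply hpk
    refine ⟨hWall, ?_⟩
    intro a b c ha hb hc hab hac hbc
    obtain ⟨x₀, hx₀, hc'⟩ := hcon a b c ha hb hc hab hac hbc
    by_cases hN0 : NeverCond (restrictDom (D ∪ {W}) {a, b, c}) x₀ 0
    · exact ⟨x₀, hx₀, Or.inl hN0⟩
    · exact ⟨x₀, hx₀, Or.inr (hc' hN0)⟩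
  obtain ⟨a, b, c, haA, hbA, hcA, hab, hac, hbc, hfail⟩ := hex
  set B : Finset α := {a, b, c} with hBdef
  have hBsub : B ⊆ A := triple_subset haA hbA hcA
  have hBcard : B.card = 3 := triple_card hab hac hbc
  obtain ⟨x₀, hx₀B, hcond⟩ := hD.2 a b c haA hbA hcA hab hac hbc
  -- x and y both belong to the triple
  have hxyB : x ∈ B ∧ y ∈ B := by
    by_contra hnb
    have hres : restrictOrd W B = restrictOrd R B := by
      rw [hRdec, hWdef]
      exact restr_swap_eq hnb
    rcases hcond with h0 | h2
    · exact (hfail x₀ hx₀B).1 (nevercond_union_iff.2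
        ⟨h0, by rw [hres]; exact nevercond_iff.1 h0 R hRD⟩)
    · exact (hfail x₀ hx₀B).2 (nevercond_union_iff.2
        ⟨h2, by rw [hres]; exact nevercond_iff.1 h2 R hRD⟩)
  have hxB := hxyB.1
  have hyB := hxyB.2
  -- the third element of the triple
  have h2c : ((B.erase x).erase y).card = 1 := by
    rw [Finset.card_erase_of_mem (Finset.mem_erase.2 ⟨Ne.symm hxy, hyB⟩),
      Finset.card_erase_of_mem hxB, hBcard]
  obtain ⟨w, hw1⟩ := Finset.card_eq_one.1 h2c
  have hwEE : w ∈ (B.erase x).erase y := by rw [hw1]; simp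
  have hwy : w ≠ y := Finset.ne_of_mem_erase hwEE
  have hwEx : w ∈ B.erase x := Finset.mem_of_mem_erase hwEE
  have hwx : w ≠ x := Finset.ne_of_mem_erase hwEx
  have hwB : w ∈ B := Finset.mem_of_mem_erase hwEx
  have hthird : ∀ z ∈ B, z ≠ x → z ≠ y → z = w := by
    intro z hz hzx hzy
    have : z ∈ (B.erase x).erase y :=
      Finset.mem_erase.2 ⟨hzy, Finset.mem_erase.2 ⟨hzx, hz⟩⟩
    rw [hw1] at this
    exact Finset.mem_singleton.1 this
  have hwA : w ∈ A := hBsub hwB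
  have hwR : w ∈ R := (mem_of_linord_mem hRlin).2 hwA
  -- locate w: in l₁ or l₂
  have hwl : w ∈ l₁ ∨ w ∈ l₂ := by
    rw [hRdec] at hwR
    rcases List.mem_append.1 hwR with h1 | h2
    · exact Or.inl h1
    rcases List.mem_cons.1 h2 with rfl | h3
    · exact absurd rfl hwx
    rcases List.mem_cons.1 h3 with rfl | h4
    · exact absurd rfl hwy
    · exact Or.inr h4
  -- useful orders in W
  have hWy_l2 : ∀ v ∈ l₂, COrd W y v := fun v hv => cord_decomp_x_right hWnd hv
  have hWx_l2 : ∀ v ∈ l₂, COrd W x v := fun v hv => cord_decomp_y_right hWnd hv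
  have hW_l1 : ∀ u ∈ l₁, ∀ v ∈ y :: x :: l₂, COrd W u v :=
    fun u hu v hv => cord_decomp_left hWnd hu hv
  -- W violates the domain condition on the triple
  rcases hcond with hN0 | hN2
  · -- never-top condition on x₀
    exfalso
    have hWviol : (restrictOrd W B)[((0 : Fin 3) : ℕ)]? = some x₀ := by
      have hnot := (hfail x₀ hx₀B).1
      rw [nevercond_union_iff] at hnot
      rcases Classical.em ((restrictOrd W B)[((0 : Fin 3) : ℕ)]? = some x₀) with h | h
      · exact h
      · exact absurd ⟨hN0, h⟩ hnot
    rcases (restr_top_iff hWlin hBsub).1 hWviol with ⟨_, hall⟩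
    by_cases hx0x : x₀ = x
    · have hcc := hall y hyB (by rw [hx0x]; exact Ne.symm hxy)
      rw [hx0x] at hcc
      exact hWyx.asymm hcc
    by_cases hx0y : x₀ = y
    · rcases hwl with hw1' | hw2'
      · have hcc := hall w hwB (by rw [hx0y]; exact hwy)
        rw [hx0y] at hcc
        exact (hW_l1 w hw1' y (by simp)).asymm hcc
      · obtain ⟨z, hzB, hzy, hTzy⟩ := never_top_elim hN0 hTD hTlin hBsub hx₀B
        rw [hx0y] at hzy hTzy
        by_cases hzx : z = x
        · rw [hzx] at hTzy
          exact hTyx.asymm hTzy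
        · have hzw : z = w := hthird z hzB hzx hzy
          rw [hzw] at hTzy
          have hRyw : COrd R y w := by
            rw [hRdec]
            exact cord_decomp_y_right hRnd hw2'
          exact hminT w hwA ⟨y, hyA, hRyw, hTzy⟩ hTzy
    · have hx0w : x₀ = w := hthird x₀ hx₀B hx0x hx0y
      rcases hwl with hw1' | hw2'
      · -- w also top of R on the triple, contradicting hN0
        apply nevercond_iff.1 hN0 R hRD
        show (restrictOrd R B)[((0 : Fin 3) : ℕ)]? = some x₀
        rw [hx0w]
        refine (restr_top_iff hRlin hBsub).2 ⟨hwB, ?_⟩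
        intro z hzB hzw
        by_cases hzx : z = x
        · rw [hzx, hRdec]
          exact cord_decomp_left hRnd hw1' (by simp)
        by_cases hzy : z = y
        · rw [hzy, hRdec]
          exact cord_decomp_left hRnd hw1' (by simp)
        · exact absurd (hthird z hzB hzx hzy) hzw
      · have hcc := hall x hxB (by rw [hx0w]; exact Ne.symm hwx)
        rw [hx0w] at hcc
        exact (hWx_l2 w hw2').asymm hcc
  · -- never-bottom condition on x₀
    have hWviol : (restrictOrd W B)[((2 : Fin 3) : ℕ)]? = some x₀ := by
      have hnot := (hfail x₀ hx₀B).2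
      rw [nevercond_union_iff] at hnot
      rcases Classical.em ((restrictOrd W B)[((2 : Fin 3) : ℕ)]? = some x₀) with h | h
      · exact h
      · exact absurd ⟨hN2, h⟩ hnot
    rcases (restr_bot_iff hWlin hBsub hBcard).1 hWviol with ⟨_, hall⟩
    by_cases hx0y : x₀ = y
    · exfalso
      have hcc := hall x hxB (by rw [hx0y]; exact hxy)
      rw [hx0y] at hcc
      exact hWyx.asymm hcc
    by_cases hx0w : x₀ = w
    · exfalso
      rcases hwl with hw1' | hw2'
      · have hcc := hall x hxB (by rw [hx0w]; exact Ne.symm hwx)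
        rw [hx0w] at hcc
        exact (hW_l1 w hw1' x (by simp)).asymm hcc
      · apply nevercond_iff.1 hN2 R hRD
        show (restrictOrd R B)[((2 : Fin 3) : ℕ)]? = some x₀
        rw [hx0w]
        refine (restr_bot_iff hRlin hBsub hBcard).2 ⟨hwB, ?_⟩
        intro z hzB hzw
        by_cases hzx : z = x
        · rw [hzx, hRdec]
          exact cord_decomp_x_right hRnd hw2'
        by_cases hzy : z = y
        · rw [hzy, hRdec]
          exact cord_decomp_y_right hRnd hw2'
        · exact absurd (hthird z hzB hzx hzy) hzw
    · -- x₀ = x : the main (median) case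
      have hx0x : x₀ = x := by
        by_contra hx0x
        exact hx0w (hthird x₀ hx₀B hx0x hx0y)
      rw [hx0x] at hN2
      -- w must be above x in R
      have hwl1 : w ∈ l₁ := by
        rcases hwl with h | h
        · exact h
        · exfalso
          have hcc := hall w hwB (by rw [hx0x]; exact hwx)
          rw [hx0x] at hcc
          exact (hWx_l2 w h).asymm hcc
      -- T ranks x above w
      have hTxw : COrd T x w := by
        obtain ⟨z, hzB, hzx, hTxz⟩ := never_bot_elim hN2 hTD hTlin hBsub hBcard hxB
        by_cases hzy : z = y
        · rw [hzy] at hTxz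
          exact absurd hTxz (fun hcc => hTyx.asymm hcc)
        · have hzw : z = w := hthird z hzB hzx hzy
          rw [hzw] at hTxz
          exact hTxz
      -- some V ∈ D has x on top of the triple
      have hV : ∃ V ∈ D, COrd V x y ∧ COrd V x w := by
        have hnot := (hfail x hxB).1
        rw [nevercond_union_iff] at hnot
        rcases Classical.em (NeverCond (restrictDom D B) x 0) with hN | hN
        · exfalso
          apply hnot
          refine ⟨hN, ?_⟩
          intro hWtop
          rcases (restr_top_iff hWlin hBsub).1 hWtop with ⟨_, hall'⟩
          exact hWyx.asymm (hall' y hyB (Ne.symm hxy))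
        · rw [nevercond_iff] at hN
          push_neg at hN
          obtain ⟨V, hVD, hVtop⟩ := hN
          rcases (restr_top_iff (hD.1 V hVD) hBsub).1 hVtop with ⟨_, hall'⟩
          exact ⟨V, hVD, hall' y hyB (Ne.symm hxy), hall' w hwB hwx⟩
      obtain ⟨V, hVD, hVxy, hVxw⟩ := hV
      have hmD : majSort R T V ∈ D := majSort_mem hD hmax hRD hTD hVD
      have hmB : Btwn (majSort R T V) R T := btwn_majSort hD hRD hTD hVD
      have hmxy : COrd (majSort R T V) x y :=
        (cord_majSort hD hRD hTD hVD hxA hyA hxy).2 (Or.inr (Or.inl ⟨hcxy, hVxy⟩))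
      have hmxw : COrd (majSort R T V) x w :=
        (cord_majSort hD hRD hTD hVD hxA hwA (Ne.symm hwx)).2
          (Or.inr (Or.inr ⟨hTxw, hVxw⟩))
      have hRwx : COrd R w x := by
        rw [hRdec]
        exact cord_decomp_left hRnd hwl1 (by simp)
      refine ⟨majSort R T V, hmD, hmB, ?_, Or.inr ?_⟩
      · intro he
        rw [he] at hmxw
        exact hRwx.asymm hmxw
      · intro he
        rw [he] at hmxy
        exact hTyx.asymm hmxy

/-! ### building geodesics -/

lemma geo_exists {D : Set (List α)} {A : Finset α} (hD : IsPeakPitDomain A D)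
    (hmax : ∀ D' : Set (List α), IsPeakPitDomain A D' → D ⊆ D' → D = D') :
    ∀ k : ℕ, ∀ R T : List α, R ∈ D → T ∈ D → cdist R T = k →
      ∃ P : List (List α), P ≠ [] ∧ P.Chain' Alike ∧ P.head? = some R ∧
        P.getLast? = some T ∧ P.length = k + 1 ∧ ∀ l ∈ P, l ∈ D := by
  intro k
  induction k using Nat.strong_induction_on with
  | _ k ih =>
    intro R T hRD hTD hk
    rcases eq_or_ne R T with rfl | hne
    · refine ⟨[R], by simp, List.isChain_singleton _, by simp, by simp, ?_, ?_⟩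
      · have hk0 : k = 0 := by rw [← hk, cdist_self]
        simp [hk0]
      · intro l hl
        rcases List.mem_singleton.1 hl with rfl
        exact hRD
    · obtain ⟨m, hmD, hmB, hmR, hAm⟩ := exists_strict_between hD hmax hRD hTD hne
      have hRlin := hD.1 R hRD
      have hmlin := hD.1 m hmD
      have hTlin := hD.1 T hTD
      have hadd : cdist R m + cdist m T = cdist R T :=
        cdist_add_of_btwn hRlin hmlin hTlin hmB
      have h1 : 1 ≤ cdist R m := by
        rcases Nat.eq_zero_or_pos (cdist R m) with h | h
        · exact absurd ((cdist_eq_zero_iff hRlin hmlin).1 h).symm hmR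
        · exact h
      rcases hAm with hAlike | hmT
      · -- prepend: P = R :: P₂
        have hc1 : cdist R m = 1 := alike_cdist_one hRlin.1 hAlike
        have hklt : cdist m T < k := by omega
        obtain ⟨P₂, hP2ne, hP2ch, hP2h, hP2l, hP2len, hP2mem⟩ :=
          ih (cdist m T) hklt m T hmD hTD rfl
        refine ⟨R :: P₂, by simp, ?_, by simp, ?_, ?_, ?_⟩
        · refine hP2ch.cons ?_
          intro q hq
          rw [hP2h] at hq
          have hqm2 : m = q := by simpa using hq
          rw [← hqm2]
          exact hAlike
        · cases P₂ with
          | nil => exact absurd rfl hP2ne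
          | cons q t => rw [List.getLast?_cons_cons]; exact hP2l
        · simp only [List.length_cons, hP2len]
          omega
        · intro l hl
          rcases List.mem_cons.1 hl with rfl | hl'
          · exact hRD
          · exact hP2mem l hl'
      · -- append through m
        have h2 : 1 ≤ cdist m T := by
          rcases Nat.eq_zero_or_pos (cdist m T) with h | h
          · exact absurd ((cdist_eq_zero_iff hmlin hTlin).1 h) hmT
          · exact h
        have hlt1 : cdist R m < k := by omega
        have hlt2 : cdist m T < k := by omega
        obtain ⟨P₁, hP1ne, hP1ch, hP1h, hP1l, hP1len, hP1mem⟩ :=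
          ih (cdist R m) hlt1 R m hRD hmD rfl
        obtain ⟨P₂, hP2ne, hP2ch, hP2h, hP2l, hP2len, hP2mem⟩ :=
          ih (cdist m T) hlt2 m T hmD hTD rfl
        cases P₂ with
        | nil => exact absurd rfl hP2ne
        | cons q t =>
          have hqm : q = m := by simpa using hP2h
          rw [hqm] at hP2ch hP2l hP2mem
          refine ⟨P₁ ++ t, by simp [hP1ne], ?_, ?_, ?_, ?_, ?_⟩
          · refine List.IsChain.append hP1ch hP2ch.tail ?_
            intro u hu v hv
            rw [hP1l] at hu
            have hum : m = u := by simpa using hu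
            rw [← hum]
            cases t with
            | nil => simp at hv
            | cons v' t' =>
              have hvv : v' = v := by simpa using hv
              rw [← hvv]
              exact (List.isChain_cons_cons.1 hP2ch).1
          · cases P₁ with
            | nil => exact absurd rfl hP1ne
            | cons p1 t1 =>
              have hp1 : p1 = R := by simpa using hP1h
              subst hp1
              simp
          · cases t with
            | nil =>
              -- then m = T
              have hmT' : m = T := by simpa using hP2l
              rw [List.append_nil, hP1l, hmT']
            | cons v' t' =>
              rw [List.getLast?_append]
              have : (v' :: t').getLast? = some T := by
                rw [← List.getLast?_cons_cons (a := m)]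
                exact hP2l
              rw [this]
              rfl
          · rw [List.length_append]
            simp only [List.length_cons] at hP2len
            omega
          · intro l hl
            rcases List.mem_append.1 hl with h | h
            · exact hP1mem l h
            · exact hP2mem l (List.mem_cons_of_mem _ h)

end CD

/-- Every maximal peak-pit Condorcet domain on a finite set `A`
is directly connected. -/
theorem maximal_peakPit_directlyConnected [DecidableEq α] (A : Finset α)
    (D : Set (List α)) (hD : IsPeakPitDomain A D)
    (hmax : ∀ D' : Set (List α), IsPeakPitDomain A D' → D ⊆ D' → D = D') :
    DirectlyConnectedDomain A D := by
  intro R hRD T hTD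
  obtain ⟨P, hPne, hPch, hPh, hPl, hPlen, hPmem⟩ :=
    CD.geo_exists hD hmax (CD.cdist R T) R T hRD hTD rfl
  refine ⟨P, ⟨⟨⟨hPne, fun l hl => hD.1 l (hPmem l hl), hPch⟩, hPh, hPl⟩, ?_⟩, hPmem⟩
  intro Q hQ
  have hge := CD.path_length_ge Q R T hQ
  omega
end

section
/- Let A be a set of at least four alternatives, let D ⊆ L(A) be a domain, and let a ∈ A. If D is directly connected, then the restricted domain D_{-a} = D_{A∖{a}} is directly connected. -/
/-!
Common definitions for formalizing Condorcet domains.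

A linear order on a finite set `A : Finset α` of alternatives is encoded as a
duplicate-free list enumerating the elements of `A` from most preferred (head)
to least preferred (last).
-/

variable {α : Type*}

section DirectlyConnectedAux

open List

variable [DecidableEq α]

private lemma bef_total {T : List α} {p q : α} (hp : p ∈ T) (hq : q ∈ T)
    (hpq : p ≠ q) : idxOf p T < idxOf q T ∨ idxOf q T < idxOf p T := by
  have h : idxOf p T ≠ idxOf q T := fun h => hpq ((List.idxOf_inj hp).mp h)
  omega

private lemma swap_nodup_facts {l₁ l₂ : List α} {x y : α}
    (hU : (l₁ ++ x :: y :: l₂).Nodup) :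
    x ≠ y ∧ x ∉ l₁ ∧ y ∉ l₁ := by
  rw [List.nodup_append] at hU
  obtain ⟨h1, h2, hdisj⟩ := hU
  rw [List.nodup_cons] at h2
  refine ⟨fun h => h2.1 (h ▸ List.mem_cons_self), ?_, ?_⟩
  · exact fun h => hdisj x h x List.mem_cons_self rfl
  · exact fun h => hdisj y h y (List.mem_cons_of_mem _ List.mem_cons_self) rfl

private lemma swap_idx4 {l₁ l₂ : List α} {x y : α}
    (hU : (l₁ ++ x :: y :: l₂).Nodup) :
    idxOf x (l₁ ++ x :: y :: l₂) = l₁.length ∧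
    idxOf y (l₁ ++ x :: y :: l₂) = l₁.length + 1 ∧
    idxOf x (l₁ ++ y :: x :: l₂) = l₁.length + 1 ∧
    idxOf y (l₁ ++ y :: x :: l₂) = l₁.length := by
  obtain ⟨hxy, hx1, hy1⟩ := swap_nodup_facts hU
  refine ⟨?_, ?_, ?_, ?_⟩
  · rw [idxOf_append_of_notMem hx1, idxOf_cons_self]
    omega
  · rw [idxOf_append_of_notMem hy1, idxOf_cons_ne _ hxy, idxOf_cons_self]
  · rw [idxOf_append_of_notMem hx1, idxOf_cons_ne _ hxy.symm, idxOf_cons_self]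
  · rw [idxOf_append_of_notMem hy1, idxOf_cons_self]
    omega

private lemma swap_profile {l₁ l₂ : List α} {x y : α}
    (hU : (l₁ ++ x :: y :: l₂).Nodup) {u : α} (hu : u ∈ l₁ ++ x :: y :: l₂) :
    (u = x ∧ idxOf u (l₁ ++ x :: y :: l₂) = l₁.length ∧
        idxOf u (l₁ ++ y :: x :: l₂) = l₁.length + 1) ∨
    (u = y ∧ idxOf u (l₁ ++ x :: y :: l₂) = l₁.length + 1 ∧
        idxOf u (l₁ ++ y :: x :: l₂) = l₁.length) ∨
    (u ≠ x ∧ u ≠ y ∧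
      idxOf u (l₁ ++ y :: x :: l₂) = idxOf u (l₁ ++ x :: y :: l₂) ∧
      (idxOf u (l₁ ++ x :: y :: l₂) < l₁.length ∨
        l₁.length + 2 ≤ idxOf u (l₁ ++ x :: y :: l₂))) := by
  obtain ⟨hxy, hx1, hy1⟩ := swap_nodup_facts hU
  obtain ⟨e1, e2, e3, e4⟩ := swap_idx4 hU
  by_cases hux : u = x
  · subst hux; exact Or.inl ⟨rfl, e1, e3⟩
  by_cases huy : u = y
  · subst huy; exact Or.inr (Or.inl ⟨rfl, e2, e4⟩)
  refine Or.inr (Or.inr ⟨hux, huy, ?_⟩)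
  by_cases hu1 : u ∈ l₁
  · rw [idxOf_append_of_mem hu1, idxOf_append_of_mem hu1]
    exact ⟨rfl, Or.inl (idxOf_lt_length_of_mem hu1)⟩
  · have f1 : idxOf u (x :: y :: l₂) = idxOf u l₂ + 2 := by
      rw [idxOf_cons_ne _ (Ne.symm hux), idxOf_cons_ne _ (Ne.symm huy)]
    have f2 : idxOf u (y :: x :: l₂) = idxOf u l₂ + 2 := by
      rw [idxOf_cons_ne _ (Ne.symm huy), idxOf_cons_ne _ (Ne.symm hux)]
    rw [idxOf_append_of_notMem hu1, idxOf_append_of_notMem hu1, f1, f2]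
    omega

private def discSet (R T : List α) : Finset (α × α) :=
  (R.toFinset ×ˢ R.toFinset).filter
    (fun p => idxOf p.1 R < idxOf p.2 R ∧ idxOf p.2 T < idxOf p.1 T)

private lemma mem_discSet {R T : List α} {p : α × α} :
    p ∈ discSet R T ↔ p.1 ∈ R ∧ p.2 ∈ R ∧
      idxOf p.1 R < idxOf p.2 R ∧ idxOf p.2 T < idxOf p.1 T := by
  simp [discSet, Finset.mem_filter, Finset.mem_product, List.mem_toFinset, and_assoc]

private lemma mem_discSet' {R T : List α} {p q : α} :
    (p, q) ∈ discSet R T ↔ p ∈ R ∧ q ∈ R ∧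
      idxOf p R < idxOf q R ∧ idxOf q T < idxOf p T := by
  simp [mem_discSet]

private def disc (R T : List α) : ℕ := (discSet R T).card

private def discA (a : α) (R T : List α) : ℕ :=
  ((discSet R T).filter (fun p => p.1 = a ∨ p.2 = a)).card

private lemma discSet_self (R : List α) : discSet R R = ∅ := by
  ext p
  simp only [Finset.notMem_empty, iff_false, mem_discSet]
  rintro ⟨-, -, h3, h4⟩
  omega

private lemma disc_self (R : List α) : disc R R = 0 := by
  rw [disc, discSet_self, Finset.card_empty]

private lemma discA_self (a : α) (R : List α) : discA a R R = 0 := by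
  rw [discA, discSet_self, Finset.filter_empty, Finset.card_empty]

private lemma discSet_subset_union {R T U : List α}
    (hRT : R.toFinset = T.toFinset) :
    discSet R U ⊆ discSet R T ∪ discSet T U := by
  rintro ⟨p, q⟩ hmem
  rw [mem_discSet'] at hmem
  obtain ⟨hp, hq, h1, h2⟩ := hmem
  have hpq : p ≠ q := fun h => by subst h; omega
  have hpT : p ∈ T := by rw [← List.mem_toFinset, ← hRT, List.mem_toFinset]; exact hp
  have hqT : q ∈ T := by rw [← List.mem_toFinset, ← hRT, List.mem_toFinset]; exact hq
  rcases bef_total hpT hqT hpq with h | h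
  · exact Finset.mem_union_right _ (mem_discSet'.2 ⟨hpT, hqT, h, h2⟩)
  · exact Finset.mem_union_left _ (mem_discSet'.2 ⟨hp, hq, h1, h⟩)

private lemma disc_triangle {R T U : List α} (hRT : R.toFinset = T.toFinset) :
    disc R U ≤ disc R T + disc T U :=
  le_trans (Finset.card_le_card (discSet_subset_union hRT)) (Finset.card_union_le _ _)

private lemma discA_triangle (a : α) {R T U : List α} (hRT : R.toFinset = T.toFinset) :
    discA a R U ≤ discA a R T + discA a T U := by
  have h := Finset.filter_subset_filter (fun p : α × α => p.1 = a ∨ p.2 = a)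
    (discSet_subset_union (U := U) hRT)
  rw [Finset.filter_union] at h
  exact le_trans (Finset.card_le_card h) (Finset.card_union_le _ _)

private lemma discSet_alike_subset {l₁ l₂ : List α} {x y : α}
    (hU : (l₁ ++ x :: y :: l₂).Nodup) :
    discSet (l₁ ++ x :: y :: l₂) (l₁ ++ y :: x :: l₂) ⊆ {(x, y)} := by
  rintro ⟨p, q⟩ hmem
  rw [mem_discSet'] at hmem
  obtain ⟨hp, hq, h1, h2⟩ := hmem
  rw [Finset.mem_singleton]
  rcases swap_profile hU hp with ⟨rfl, a1, a2⟩ | ⟨rfl, a1, a2⟩ | ⟨hpx, hpy, a1, a2⟩ <;>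
    rcases swap_profile hU hq with ⟨rfl, b1, b2⟩ | ⟨rfl, b1, b2⟩ | ⟨hqx, hqy, b1, b2⟩ <;>
    first
      | rfl
      | (exfalso; omega)

private lemma disc_alike_le {U V : List α} (hU : U.Nodup) (h : Alike U V) :
    disc U V ≤ 1 := by
  obtain ⟨l₁, l₂, x, y, hxy, rfl, rfl⟩ := h
  calc disc _ _ ≤ ({(x, y)} : Finset (α × α)).card :=
        Finset.card_le_card (discSet_alike_subset hU)
    _ = 1 := Finset.card_singleton _

end DirectlyConnectedAux
section DirectlyConnectedAux2

open List

variable [DecidableEq α]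

private lemma exists_adj_discordant {R T : List α} (hR : R.Nodup) (hT : T.Nodup)
    (hft : R.toFinset = T.toFinset) (hne : R ≠ T) :
    ∃ l₁ x y l₂, R = l₁ ++ x :: y :: l₂ ∧ idxOf y T < idxOf x T := by
  by_contra hcon
  push_neg at hcon
  have hchain : List.Chain' (fun u v => idxOf u T < idxOf v T) R := by
    show List.IsChain _ R
    rw [List.isChain_iff_getElem]
    intro i hi
    have hilt : i < R.length := by omega
    have hilt2 : i + 1 < R.length := by omega
    have hdec : R = R.take i ++ R[i] :: R[i + 1] :: R.drop (i + 1 + 1) := by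
      have h1 : R.drop i = R[i] :: R.drop (i + 1) := List.drop_eq_getElem_cons hilt
      have h2 : R.drop (i + 1) = R[i + 1] :: R.drop (i + 1 + 1) :=
        List.drop_eq_getElem_cons hilt2
      conv_lhs => rw [← List.take_append_drop i R]
      rw [h1, h2]
    have hle := hcon (R.take i) (R[i]) (R[i + 1]) (R.drop (i + 1 + 1)) hdec
    have e1 : idxOf R[i] R = i := List.Nodup.idxOf_getElem hR i hilt
    have e2 : idxOf R[i + 1] R = i + 1 := List.Nodup.idxOf_getElem hR (i + 1) hilt2
    have hne2 : R[i] ≠ R[i + 1] := fun h => by rw [h] at e1; omega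
    have hm1 : R[i] ∈ T := by
      have : R[i] ∈ R.toFinset := List.mem_toFinset.mpr (List.getElem_mem _)
      rw [hft] at this; exact List.mem_toFinset.mp this
    have hm2 : R[i + 1] ∈ T := by
      have : R[i + 1] ∈ R.toFinset := List.mem_toFinset.mpr (List.getElem_mem _)
      rw [hft] at this; exact List.mem_toFinset.mp this
    rcases bef_total hm1 hm2 hne2 with h | h
    · exact h
    · omega
  haveI : IsTrans α (fun u v => idxOf u T < idxOf v T) := ⟨fun a b c => Nat.lt_trans⟩
  have hpw : List.Pairwise (fun u v => idxOf u T < idxOf v T) R :=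
    List.isChain_iff_pairwise.mp hchain
  haveI : Std.Antisymm (fun u v => idxOf u T < idxOf v T ∨ u = v) := by
    constructor
    intro a b h1 h2
    rcases h1 with h1 | h1
    · rcases h2 with h2 | h2
      · omega
      · exact h2.symm
    · exact h1
  have hRs : List.Pairwise (fun u v => idxOf u T < idxOf v T ∨ u = v) R :=
    hpw.imp (fun h => Or.inl h)
  have hTs : List.Pairwise (fun u v => idxOf u T < idxOf v T ∨ u = v) T := by
    rw [List.pairwise_iff_getElem]
    intro i j hi hj hij
    left
    rw [List.Nodup.idxOf_getElem hT i hi, List.Nodup.idxOf_getElem hT j hj]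
    exact hij
  exact hne (List.Perm.eq_of_pairwise' hRs hTs
    (List.perm_of_nodup_nodup_toFinset_eq hR hT hft))

private lemma disc_swap_lt {l₁ l₂ : List α} {x y : α} {T : List α}
    (hU : (l₁ ++ x :: y :: l₂).Nodup) (hd : idxOf y T < idxOf x T) :
    disc (l₁ ++ y :: x :: l₂) T + 1 ≤ disc (l₁ ++ x :: y :: l₂) T := by
  have hperm : (l₁ ++ y :: x :: l₂) ~ (l₁ ++ x :: y :: l₂) :=
    List.Perm.append_left l₁ (List.Perm.swap x y l₂)
  obtain ⟨e1, e2, e3, e4⟩ := swap_idx4 hU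
  have hxR : x ∈ l₁ ++ x :: y :: l₂ := by simp
  have hyR : y ∈ l₁ ++ x :: y :: l₂ := by simp
  have hsub : discSet (l₁ ++ y :: x :: l₂) T ⊆ discSet (l₁ ++ x :: y :: l₂) T := by
    rintro ⟨p, q⟩ hmem
    rw [mem_discSet'] at hmem
    obtain ⟨hp, hq, h1, h2⟩ := hmem
    have hpR : p ∈ l₁ ++ x :: y :: l₂ := hperm.mem_iff.mp hp
    have hqR : q ∈ l₁ ++ x :: y :: l₂ := hperm.mem_iff.mp hq
    rcases swap_profile hU hpR with ⟨rfl, a1, a2⟩ | ⟨rfl, a1, a2⟩ | ⟨hpx, hpy, a1, a2⟩ <;>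
      rcases swap_profile hU hqR with ⟨rfl, b1, b2⟩ | ⟨rfl, b1, b2⟩ | ⟨hqx, hqy, b1, b2⟩ <;>
      first
        | exact mem_discSet'.2 ⟨hpR, hqR, by omega, h2⟩
        | exact absurd h1 (by omega)
        | exact absurd h2 (by omega)
  have hwit : (x, y) ∈ discSet (l₁ ++ x :: y :: l₂) T :=
    mem_discSet'.2 ⟨hxR, hyR, by omega, hd⟩
  have hnot : (x, y) ∉ discSet (l₁ ++ y :: x :: l₂) T := by
    intro h
    rw [mem_discSet'] at h
    omega
  have hss : discSet (l₁ ++ y :: x :: l₂) T ⊂ discSet (l₁ ++ x :: y :: l₂) T :=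
    (Finset.ssubset_iff_of_subset hsub).mpr ⟨(x, y), hwit, hnot⟩
  have := Finset.card_lt_card hss
  unfold disc
  omega

end DirectlyConnectedAux2
section DirectlyConnectedAux3

open List

variable [DecidableEq α]

private lemma pairwise_idxOf {l : List α} (hl : l.Nodup) :
    List.Pairwise (fun u v => idxOf u l < idxOf v l) l := by
  rw [List.pairwise_iff_getElem]
  intro i j hi hj hij
  rw [List.Nodup.idxOf_getElem hl i hi, List.Nodup.idxOf_getElem hl j hj]
  exact hij

private lemma pair_sublist_total {l : List α} {p q : α} (hp : p ∈ l) (hq : q ∈ l)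
    (hpq : p ≠ q) : [p, q] <+ l ∨ [q, p] <+ l := by
  induction l with
  | nil => simp at hp
  | cons h t ih =>
    rcases List.mem_cons.mp hp with rfl | hp'
    · have hq' : q ∈ t := (List.mem_cons.mp hq).resolve_left (fun h => hpq h.symm)
      exact Or.inl ((List.singleton_sublist.mpr hq').cons₂ p)
    · rcases List.mem_cons.mp hq with rfl | hq'
      · exact Or.inr ((List.singleton_sublist.mpr hp').cons₂ q)
      · rcases ih hp' hq' with h1 | h1
        · exact Or.inl (h1.cons _)
        · exact Or.inr (h1.cons _)

private lemma pair_sublist_iff {l : List α} (hl : l.Nodup) {p q : α} (hp : p ∈ l)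
    (hq : q ∈ l) (hpq : p ≠ q) : [p, q] <+ l ↔ idxOf p l < idxOf q l := by
  constructor
  · intro hs
    have hpw := (pairwise_idxOf hl).sublist hs
    exact (List.pairwise_cons.mp hpw).1 q (by simp)
  · intro hlt
    rcases pair_sublist_total hp hq hpq with h | h
    · exact h
    · exfalso
      have hpw := (pairwise_idxOf hl).sublist h
      have := (List.pairwise_cons.mp hpw).1 p (by simp)
      omega

private lemma bef_filter_iff {l : List α} (hl : l.Nodup) (f : α → Bool) {p q : α}
    (hp : p ∈ l.filter f) (hq : q ∈ l.filter f) (hpq : p ≠ q) :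
    (idxOf p (l.filter f) < idxOf q (l.filter f) ↔ idxOf p l < idxOf q l) := by
  have hpl : p ∈ l := (List.mem_filter.mp hp).1
  have hql : q ∈ l := (List.mem_filter.mp hq).1
  rw [← pair_sublist_iff (hl.filter f) hp hq hpq, ← pair_sublist_iff hl hpl hql hpq]
  constructor
  · intro h
    exact h.trans (List.filter_sublist (l := l))
  · intro h
    have h2 := h.filter f
    rwa [show ([p, q].filter f) = [p, q] from by
      simp [List.filter_cons, (List.mem_filter.mp hp).2, (List.mem_filter.mp hq).2]] at h2

private lemma disc_decomp {A : Finset α} (a : α) {R T : List α}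
    (hR : IsLinOrd A R) (hT : IsLinOrd A T) :
    disc R T = disc (restrictOrd R (A.erase a)) (restrictOrd T (A.erase a)) + discA a R T := by
  have hmemR : ∀ u, u ∈ R ↔ u ∈ A := fun u => by rw [← hR.2, List.mem_toFinset]
  have hmemT : ∀ u, u ∈ T ↔ u ∈ A := fun u => by rw [← hT.2, List.mem_toFinset]
  have key : (discSet R T).filter (fun p => ¬(p.1 = a ∨ p.2 = a)) =
      discSet (restrictOrd R (A.erase a)) (restrictOrd T (A.erase a)) := by
    ext ⟨p, q⟩
    simp only [Finset.mem_filter, mem_discSet', not_or]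
    constructor
    · rintro ⟨⟨hp, hq, h1, h2⟩, hpa, hqa⟩
      have hpq : p ≠ q := fun h => by subst h; omega
      have hpB : p ∈ A.erase a := Finset.mem_erase.mpr ⟨hpa, (hmemR p).mp hp⟩
      have hqB : q ∈ A.erase a := Finset.mem_erase.mpr ⟨hqa, (hmemR q).mp hq⟩
      have hpR' : p ∈ restrictOrd R (A.erase a) :=
        List.mem_filter.mpr ⟨hp, by simpa using hpB⟩
      have hqR' : q ∈ restrictOrd R (A.erase a) :=
        List.mem_filter.mpr ⟨hq, by simpa using hqB⟩
      have hpT' : p ∈ restrictOrd T (A.erase a) :=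
        List.mem_filter.mpr ⟨(hmemT p).mpr ((hmemR p).mp hp), by simpa using hpB⟩
      have hqT' : q ∈ restrictOrd T (A.erase a) :=
        List.mem_filter.mpr ⟨(hmemT q).mpr ((hmemR q).mp hq), by simpa using hqB⟩
      exact ⟨hpR', hqR', (bef_filter_iff hR.1 _ hpR' hqR' hpq).mpr h1,
        (bef_filter_iff hT.1 _ hqT' hpT' hpq.symm).mpr h2⟩
    · rintro ⟨hp, hq, h1, h2⟩
      have hpq : p ≠ q := fun h => by subst h; omega
      have hpR : p ∈ R := (List.mem_filter.mp hp).1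
      have hqR : q ∈ R := (List.mem_filter.mp hq).1
      have hpB : p ∈ A.erase a := by simpa using (List.mem_filter.mp hp).2
      have hqB : q ∈ A.erase a := by simpa using (List.mem_filter.mp hq).2
      have hpT' : p ∈ restrictOrd T (A.erase a) :=
        List.mem_filter.mpr ⟨(hmemT p).mpr ((hmemR p).mp hpR), by simpa using hpB⟩
      have hqT' : q ∈ restrictOrd T (A.erase a) :=
        List.mem_filter.mpr ⟨(hmemT q).mpr ((hmemR q).mp hqR), by simpa using hqB⟩
      refine ⟨⟨hpR, hqR, (bef_filter_iff hR.1 _ hp hq hpq).mp h1,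
        (bef_filter_iff hT.1 _ hqT' hpT' hpq.symm).mp h2⟩, ?_, ?_⟩
      · exact (Finset.mem_erase.mp hpB).1
      · exact (Finset.mem_erase.mp hqB).1
  have hsplit := Finset.card_filter_add_card_filter_not
    (s := discSet R T) (p := fun p => p.1 = a ∨ p.2 = a)
  rw [key] at hsplit
  unfold disc discA
  omega

private lemma restrict_alike {U V : List α} {B : Finset α} {a : α}
    (hU : U.Nodup) (hUV : Alike U V) (haB : a ∉ B) :
    (restrictOrd U B = restrictOrd V B ∧ discA a U V ≤ 1) ∨
    (restrictOrd U B ≠ restrictOrd V B ∧ discA a U V = 0 ∧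
      Alike (restrictOrd U B) (restrictOrd V B)) := by
  have hle : discA a U V ≤ disc U V := Finset.card_le_card (Finset.filter_subset _ _)
  have hd1 : disc U V ≤ 1 := disc_alike_le hU hUV
  obtain ⟨l₁, l₂, x, y, hxy, rfl, rfl⟩ := hUV
  by_cases hx : x ∈ B <;> by_cases hy : y ∈ B
  · right
    have hxa : x ≠ a := fun h => haB (h ▸ hx)
    have hya : y ≠ a := fun h => haB (h ▸ hy)
    refine ⟨?_, ?_, ?_⟩
    · intro h
      simp only [restrictOrd, List.filter_append, List.filter_cons, hx, hy] at h
      simp only [decide_true, if_true, ite_true] at h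
      have h2 := List.append_cancel_left h
      simp only [List.cons.injEq] at h2
      exact hxy h2.1
    · rw [discA, Finset.card_eq_zero, Finset.eq_empty_iff_forall_notMem]
      rintro ⟨p, q⟩ hm
      rw [Finset.mem_filter] at hm
      have hsing := discSet_alike_subset hU hm.1
      rw [Finset.mem_singleton, Prod.mk.injEq] at hsing
      obtain ⟨rfl, rfl⟩ := hsing
      rcases hm.2 with h | h
      · exact hxa h
      · exact hya h
    · refine ⟨l₁.filter (fun u => decide (u ∈ B)), l₂.filter (fun u => decide (u ∈ B)),
        x, y, hxy, ?_, ?_⟩ <;>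
        simp [restrictOrd, List.filter_append, List.filter_cons, hx, hy]
  all_goals
    refine Or.inl ⟨?_, le_trans hle hd1⟩
  · simp [restrictOrd, List.filter_append, List.filter_cons, hx, hy]
  · simp [restrictOrd, List.filter_append, List.filter_cons, hx, hy]
  · simp [restrictOrd, List.filter_append, List.filter_cons, hx, hy]

end DirectlyConnectedAux3
section DirectlyConnectedAux4

open List

variable [DecidableEq α]

private lemma destutter'_exists_cons {β : Type*} [DecidableEq β] (u : β) (l : List β) :
    ∃ t, l.destutter' (· ≠ ·) u = u :: t := by
  induction l generalizing u with
  | nil => exact ⟨[], rfl⟩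
  | cons b l ih =>
    rw [List.destutter'_cons]
    split_ifs with h
    · exact ⟨_, rfl⟩
    · exact ih u

private lemma destutter'_getLast?_eq {β : Type*} [DecidableEq β] (u : β) (l : List β) :
    (l.destutter' (· ≠ ·) u).getLast? = (u :: l).getLast? := by
  induction l generalizing u with
  | nil => rfl
  | cons b l ih =>
    rw [List.destutter'_cons]
    split_ifs with h
    · obtain ⟨t, ht⟩ := destutter'_exists_cons b l
      rw [ht, List.getLast?_cons_cons, ← ht, ih b, List.getLast?_cons_cons]
    · have hub : u = b := not_ne_iff.mp h
      rw [ih u, List.getLast?_cons_cons, hub]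

private lemma destutter'_chain'_of {β : Type*} [DecidableEq β] {r : β → β → Prop} :
    ∀ (l : List β) (u : β), List.Chain (fun p q => p = q ∨ r p q) u l →
      List.Chain' r (l.destutter' (· ≠ ·) u)
  | [], u, _ => by simp [List.Chain']
  | b :: l, u, h => by
    obtain ⟨h1, h2⟩ := List.isChain_cons_cons.mp h
    rw [List.destutter'_cons]
    split_ifs with hne
    · obtain ⟨t, ht⟩ := destutter'_exists_cons b l
      rw [ht]
      refine List.isChain_cons_cons.mpr ⟨h1.resolve_left hne, ?_⟩
      rw [← ht]
      exact destutter'_chain'_of l b h2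
    · have hub : u = b := not_ne_iff.mp hne
      subst hub
      exact destutter'_chain'_of l u h2

private lemma path_length_lower {B : Finset α} :
    ∀ (P : List (List α)), List.Chain' Alike P →
      (∀ l ∈ P, l.Nodup ∧ l.toFinset = B) →
      ∀ {R T : List α}, P.head? = some R → P.getLast? = some T →
        disc R T + 1 ≤ P.length
  | [], _, _, R, T, hhd, _ => by simp at hhd
  | [U], _, _, R, T, hhd, hlast => by
    have h1 : U = R := by simpa using hhd
    have h2 : U = T := by simpa using hlast
    subst h1
    rw [← h2, disc_self]
    simp
  | U :: V :: rest, hch, hmem, R, T, hhd, hlast => by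
    obtain ⟨hUV, hch'⟩ := List.isChain_cons_cons.mp hch
    have hU : U = R := by simpa using hhd
    subst hU
    have hlast' : (V :: rest).getLast? = some T := by
      rwa [List.getLast?_cons_cons] at hlast
    have ih := path_length_lower (V :: rest) hch'
      (fun l hl => hmem l (List.mem_cons_of_mem _ hl)) rfl hlast'
    have h1 : disc U V ≤ 1 := disc_alike_le (hmem U (by simp)).1 hUV
    have h2 : disc U T ≤ disc U V + disc V T :=
      disc_triangle ((hmem U (by simp)).2.trans ((hmem V (by simp [List.mem_cons])).2).symm)
    simp only [List.length_cons] at ih ⊢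
    omega

private lemma exists_short_path {A : Finset α} :
    ∀ (n : ℕ) (R T : List α), IsLinOrd A R → IsLinOrd A T → disc R T ≤ n →
      ∃ P : List (List α), IsPath A P R T ∧ P.length ≤ disc R T + 1 := by
  intro n
  induction n with
  | zero =>
    intro R T hR hT hd
    by_cases hRT : R = T
    · subst hRT
      exact ⟨[R], ⟨⟨by simp, fun l hl => by rw [List.mem_singleton] at hl; exact hl ▸ hR,
        List.isChain_singleton R⟩, rfl, rfl⟩, by simp⟩
    · exfalso
      obtain ⟨l₁, x, y, l₂, rfl, hd2⟩ := exists_adj_discordant hR.1 hT.1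
        (hR.2.trans hT.2.symm) hRT
      have := disc_swap_lt hR.1 hd2
      omega
  | succ n ih =>
    intro R T hR hT hd
    by_cases hRT : R = T
    · subst hRT
      exact ⟨[R], ⟨⟨by simp, fun l hl => by rw [List.mem_singleton] at hl; exact hl ▸ hR,
        List.isChain_singleton R⟩, rfl, rfl⟩, by simp⟩
    · obtain ⟨l₁, x, y, l₂, rfl, hd2⟩ := exists_adj_discordant hR.1 hT.1
        (hR.2.trans hT.2.symm) hRT
      have hlt := disc_swap_lt hR.1 hd2
      have hperm : (l₁ ++ y :: x :: l₂) ~ (l₁ ++ x :: y :: l₂) :=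
        List.Perm.append_left l₁ (List.Perm.swap x y l₂)
      have hR2 : IsLinOrd A (l₁ ++ y :: x :: l₂) :=
        ⟨hperm.nodup_iff.mpr hR.1, (List.toFinset_eq_of_perm _ _ hperm).trans hR.2⟩
      obtain ⟨Q, ⟨⟨hQne, hQlin, hQch⟩, hQhd, hQlast⟩, hQlen⟩ :=
        ih (l₁ ++ y :: x :: l₂) T hR2 hT (by omega)
      have hxy : x ≠ y := (swap_nodup_facts hR.1).1
      have hAl : Alike (l₁ ++ x :: y :: l₂) (l₁ ++ y :: x :: l₂) :=
        ⟨l₁, l₂, x, y, hxy, rfl, rfl⟩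
      rcases Q with _ | ⟨q, Q'⟩
      · exact absurd rfl hQne
      have hq : q = (l₁ ++ y :: x :: l₂) := by simpa using hQhd
      refine ⟨(l₁ ++ x :: y :: l₂) :: q :: Q', ⟨⟨by simp, ?_, ?_⟩, rfl, ?_⟩, ?_⟩
      · intro l hl
        rcases List.mem_cons.mp hl with rfl | hl'
        · exact hR
        · exact hQlin l hl'
      · exact List.isChain_cons_cons.mpr ⟨by rw [hq]; exact hAl, hQch⟩
      · rw [List.getLast?_cons_cons]
        exact hQlast
      · simp only [List.length_cons] at hQlen ⊢
        omega

private lemma discA_restrict_len {A B : Finset α} {a : α} (haB : a ∉ B) :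
    ∀ (P : List (List α)), List.Chain' Alike P →
      (∀ l ∈ P, l.Nodup ∧ l.toFinset = A) →
      ∀ {R T : List α}, P.head? = some R → P.getLast? = some T →
        discA a R T + ((P.map (fun l => restrictOrd l B)).destutter (· ≠ ·)).length ≤ P.length
  | [], _, _, R, T, hhd, _ => by simp at hhd
  | [U], _, _, R, T, hhd, hlast => by
    have h1 : U = R := by simpa using hhd
    have h2 : U = T := by simpa using hlast
    subst h1
    rw [← h2, discA_self]
    simp
  | U :: V :: rest, hch, hmem, R, T, hhd, hlast => by
    obtain ⟨hUV, hch'⟩ := List.isChain_cons_cons.mp hch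
    have hU : U = R := by simpa using hhd
    subst hU
    have hlast' : (V :: rest).getLast? = some T := by
      rwa [List.getLast?_cons_cons] at hlast
    have ih := discA_restrict_len haB (V :: rest) hch'
      (fun l hl => hmem l (List.mem_cons_of_mem _ hl)) rfl hlast'
    have hAT : discA a U T ≤ discA a U V + discA a V T :=
      discA_triangle a ((hmem U (by simp)).2.trans ((hmem V (by simp [List.mem_cons])).2).symm)
    rcases restrict_alike (hmem U (by simp)).1 hUV haB with ⟨heq, hle⟩ | ⟨hne, h0, -⟩
    · have hcol : (((U :: V :: rest).map (fun l => restrictOrd l B)).destutter (· ≠ ·))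
          = (((V :: rest).map (fun l => restrictOrd l B)).destutter (· ≠ ·)) := by
        simp only [List.map_cons]
        rw [List.destutter_cons_cons, if_neg (not_ne_iff.mpr heq), heq, List.destutter_cons']
      rw [hcol]
      simp only [List.length_cons] at ih ⊢
      omega
    · have hexp : (((U :: V :: rest).map (fun l => restrictOrd l B)).destutter (· ≠ ·))
          = restrictOrd U B :: (((V :: rest).map (fun l => restrictOrd l B)).destutter (· ≠ ·)) := by
        simp only [List.map_cons]
        rw [List.destutter_cons_cons, if_pos hne, List.destutter_cons']
      rw [hexp]
      simp only [List.length_cons] at ih ⊢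
      omega

end DirectlyConnectedAux4

section DirectlyConnectedAux5

open List

variable [DecidableEq α]

private lemma chain_restrict {B : Finset α} {a : α} (haB : a ∉ B) :
    ∀ (L : List (List α)), List.Chain' Alike L → (∀ l ∈ L, l.Nodup) →
      List.Chain' (fun u v => u = v ∨ Alike u v) (L.map (fun l => restrictOrd l B))
  | [], _, _ => by simp [List.Chain']
  | [u], _, _ => by simp [List.Chain']
  | u :: v :: L', hch, hnd => by
    obtain ⟨h1, h2⟩ := List.isChain_cons_cons.mp hch
    rw [List.map_cons, List.map_cons]
    refine List.isChain_cons_cons.mpr ⟨?_, ?_⟩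
    · rcases restrict_alike (hnd u (by simp)) h1 haB with ⟨he, -⟩ | ⟨-, -, hA⟩
      · exact Or.inl he
      · exact Or.inr hA
    · have := chain_restrict haB (v :: L') h2 (fun l hl => hnd l (List.mem_cons_of_mem _ hl))
      rwa [List.map_cons] at this

end DirectlyConnectedAux5

/-- If `A` has at least four alternatives, `D ⊆ L(A)` is a domain,
`a ∈ A`, and `D` is directly connected, then `D_{-a}` is directly connected. -/
theorem directlyConnected_restriction [DecidableEq α] (A : Finset α)
    (hA : 4 ≤ A.card) (D : Set (List α)) (hD : ∀ l ∈ D, IsLinOrd A l)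
    (a : α) (ha : a ∈ A) (hconn : DirectlyConnectedDomain A D) :
    DirectlyConnectedDomain (A.erase a) (restrictDom D (A.erase a)) := by
  intro R' hR' T' hT'
  obtain ⟨R, hRD, rfl⟩ := hR'
  obtain ⟨T, hTD, rfl⟩ := hT'
  have haB : a ∉ A.erase a := Finset.notMem_erase a A
  have hBA : A.erase a ⊆ A := Finset.erase_subset a A
  obtain ⟨P, ⟨⟨⟨hPne, hPlin, hPch⟩, hPhd, hPlast⟩, hPmin⟩, hPD⟩ := hconn R hRD T hTD
  have hRlin := hD R hRD
  have hTlin := hD T hTD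
  have hmem : ∀ l ∈ P, l.Nodup ∧ l.toFinset = A := fun l hl => hPlin l hl
  obtain ⟨Q0, hQ0, hQ0len⟩ := exists_short_path (disc R T) R T hRlin hTlin le_rfl
  have hlow := path_length_lower P hPch hmem hPhd hPlast
  have hPlen : P.length ≤ disc R T + 1 := le_trans (hPmin Q0 hQ0) hQ0len
  have hL1 := discA_restrict_len (B := A.erase a) haB P hPch hmem hPhd hPlast
  have hdec := disc_decomp a hRlin hTlin
  have hP'len : ((P.map (fun l => restrictOrd l (A.erase a))).destutter (· ≠ ·)).length
      ≤ disc (restrictOrd R (A.erase a)) (restrictOrd T (A.erase a)) + 1 := by omega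
  have hrestrlin : ∀ l, IsLinOrd A l → IsLinOrd (A.erase a) (restrictOrd l (A.erase a)) := by
    intro l hl
    refine ⟨hl.1.filter _, ?_⟩
    rw [restrictOrd, List.toFinset_filter, hl.2]
    ext u
    simp only [Finset.mem_filter, decide_eq_true_eq]
    exact ⟨fun h => h.2, fun h => ⟨hBA h, h⟩⟩
  rcases P with _ | ⟨c, Pt⟩
  · exact absurd rfl hPne
  obtain rfl : R = c := by symm; simpa using hPhd
  refine ⟨(((R :: Pt).map (fun l => restrictOrd l (A.erase a))).destutter (· ≠ ·)),
    ⟨⟨⟨?_, ?_, ?_⟩, ?_, ?_⟩, ?_⟩, ?_⟩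
  · simp [List.destutter_eq_nil]
  · intro l hl
    have hl' := (List.destutter_sublist _ _).subset hl
    obtain ⟨m, hm, rfl⟩ := List.mem_map.mp hl'
    exact hrestrlin m (hPlin m hm)
  · have hcs := chain_restrict haB (R :: Pt) hPch (fun l hl => (hPlin l hl).1)
    rw [List.map_cons] at hcs ⊢
    rw [List.destutter_cons']
    exact destutter'_chain'_of _ _ hcs
  · rw [List.map_cons, List.destutter_cons']
    obtain ⟨t, ht⟩ := destutter'_exists_cons (restrictOrd R (A.erase a))
      (Pt.map (fun l => restrictOrd l (A.erase a)))
    rw [ht]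
    rfl
  · rw [List.map_cons, List.destutter_cons', destutter'_getLast?_eq]
    have hmc : restrictOrd R (A.erase a) :: Pt.map (fun l => restrictOrd l (A.erase a))
        = (R :: Pt).map (fun l => restrictOrd l (A.erase a)) := rfl
    rw [hmc, List.getLast?_map, hPlast]
    rfl
  · intro Q hQ
    obtain ⟨⟨hQne, hQlin, hQch⟩, hQhd, hQlast⟩ := hQ
    have hlow2 := path_length_lower Q hQch (fun l hl => hQlin l hl) hQhd hQlast
    beta_reduce at hlow2
    omega
  · intro l hl
    have hl' := (List.destutter_sublist _ _).subset hl
    obtain ⟨m, hm, rfl⟩ := List.mem_map.mp hl'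
    exact ⟨m, hPD m hm, rfl⟩
end

section
/- If 𝒜 = (R_1,…,R_i) and ℬ = (T_1,…,T_j) are geodesics of alike linear orders on L(A) such that R_i = T_1 and the switching pairs occurring in 𝒜 and in ℬ are pairwise distinct (no unordered pair of alternatives is a switching pair of both), then the concatenation 𝒞 = (R_1,…,R_i, T_2,…,T_j) is a geodesic connecting R_1 and T_j. -/
/-!
Common definitions for formalizing Condorcet domains.

A linear order on a finite set `A : Finset α` of alternatives is encoded as a
duplicate-free list enumerating the elements of `A` from most preferred (head)
to least preferred (last).
-/

variable {α : Type*}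

section GeoAux
variable [DecidableEq α]

lemma geo_order_preserved (l₁ l₂ : List α) (x y u v : α)
    (hnd : (l₁ ++ x :: y :: l₂).Nodup)
    (hu : u ∈ l₁ ++ x :: y :: l₂) (hv : v ∈ l₁ ++ x :: y :: l₂)
    (h1 : ¬(u = x ∧ v = y)) (h2 : ¬(u = y ∧ v = x)) :
    ((l₁ ++ x :: y :: l₂).idxOf u < (l₁ ++ x :: y :: l₂).idxOf v ↔
      (l₁ ++ y :: x :: l₂).idxOf u < (l₁ ++ y :: x :: l₂).idxOf v) := by
  simp only [List.nodup_append, List.nodup_cons, List.mem_cons, List.disjoint_cons_right,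
    not_or] at hnd
  obtain ⟨hndl₁, ⟨⟨hxy, hxl₂⟩, hyl₂, hndl₂⟩, hcross⟩ := hnd
  have hxl₁ : x ∉ l₁ := fun h => hcross x h x (Or.inl rfl) rfl
  have hyl₁ : y ∉ l₁ := fun h => hcross y h y (Or.inr (Or.inl rfl)) rfl
  have hdisj : ∀ {w}, w ∈ l₁ → w ∈ l₂ → False :=
    fun h hw => hcross _ h _ (Or.inr (Or.inr hw)) rfl
  have hval : ∀ w, w ∈ l₁ ++ x :: y :: l₂ →
      ((l₁ ++ x :: y :: l₂).idxOf w = (l₁ ++ y :: x :: l₂).idxOf w ∧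
        (l₁ ++ x :: y :: l₂).idxOf w ≠ l₁.length ∧
        (l₁ ++ x :: y :: l₂).idxOf w ≠ l₁.length + 1) ∨
      (w = x ∧ (l₁ ++ x :: y :: l₂).idxOf w = l₁.length ∧
        (l₁ ++ y :: x :: l₂).idxOf w = l₁.length + 1) ∨
      (w = y ∧ (l₁ ++ x :: y :: l₂).idxOf w = l₁.length + 1 ∧
        (l₁ ++ y :: x :: l₂).idxOf w = l₁.length) := by
    intro w hw
    simp only [List.mem_append, List.mem_cons] at hw
    rcases hw with hw | rfl | rfl | hw
    · left
      rw [List.idxOf_append_of_mem hw, List.idxOf_append_of_mem hw]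
      have := List.idxOf_lt_length_iff.2 hw
      omega
    · right; left
      refine ⟨rfl, ?_, ?_⟩
      · rw [List.idxOf_append_of_notMem hxl₁, List.idxOf_cons_self]; omega
      · rw [List.idxOf_append_of_notMem hxl₁,
          List.idxOf_cons_ne _ (Ne.symm (Ne.symm hxy)).symm, List.idxOf_cons_self]
    · right; right
      refine ⟨rfl, ?_, ?_⟩
      · rw [List.idxOf_append_of_notMem hyl₁, List.idxOf_cons_ne _ hxy, List.idxOf_cons_self]
      · rw [List.idxOf_append_of_notMem hyl₁, List.idxOf_cons_self]; omega
    · left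
      have hwl₁ : w ∉ l₁ := fun h => hdisj h hw
      have hwx : x ≠ w := fun h => hxl₂ (h ▸ hw)
      have hwy : y ≠ w := fun h => hyl₂ (h ▸ hw)
      rw [List.idxOf_append_of_notMem hwl₁, List.idxOf_append_of_notMem hwl₁,
        List.idxOf_cons_ne _ hwx, List.idxOf_cons_ne _ hwy,
        List.idxOf_cons_ne _ hwy, List.idxOf_cons_ne _ hwx]
      omega
  rcases hval u hu with ⟨e1, e2, e3⟩ | ⟨hux, e1, e2⟩ | ⟨huy, e1, e2⟩ <;>
    rcases hval v hv with ⟨f1, f2, f3⟩ | ⟨hvx, f1, f2⟩ | ⟨hvy, f1, f2⟩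
  · omega
  · omega
  · omega
  · omega
  · omega
  · exact absurd ⟨hux, hvy⟩ h1
  · omega
  · exact absurd ⟨huy, hvx⟩ h2
  · omega
/-- The set of discordant ordered pairs between two orders. -/
def geoDset (A : Finset α) (R T : List α) : Finset (α × α) :=
  (A ×ˢ A).filter (fun p => R.idxOf p.1 < R.idxOf p.2 ∧ T.idxOf p.2 < T.idxOf p.1)

/-- The number of discordant pairs. -/
def geoD (A : Finset α) (R T : List α) : ℕ := (geoDset A R T).card

lemma geoD_self (A : Finset α) (R : List α) : geoD A R R = 0 := by
  rw [geoD, Finset.card_eq_zero, Finset.eq_empty_iff_forall_notMem]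
  intro p hp
  simp only [geoDset, Finset.mem_filter] at hp
  omega

lemma geo_index_ne {l : List α} (h : l.Nodup) {u v : α} (hu : u ∈ l) (hv : v ∈ l)
    (huv : u ≠ v) : l.idxOf u ≠ l.idxOf v := by
  intro he
  exact huv ((List.idxOf_inj hu).1 he)

/-- One swap against the order of `T` decreases the discordance count by one. -/
lemma geoD_swap (A : Finset α) (l₁ l₂ : List α) (x y : α) (T : List α)
    (hnd : (l₁ ++ x :: y :: l₂).Nodup) (hA : (l₁ ++ x :: y :: l₂).toFinset = A)
    (hT : T.idxOf y < T.idxOf x) :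
    geoD A (l₁ ++ x :: y :: l₂) T = geoD A (l₁ ++ y :: x :: l₂) T + 1 := by
  have hnd' := hnd
  simp only [List.nodup_append, List.nodup_cons, List.mem_cons, List.disjoint_cons_right,
    not_or] at hnd'
  obtain ⟨hndl₁, ⟨⟨hxy', hxl₂⟩, hyl₂, hndl₂⟩, hcross⟩ := hnd'
  have hxl₁ : x ∉ l₁ := fun h => hcross x h x (Or.inl rfl) rfl
  have hyl₁ : y ∉ l₁ := fun h => hcross y h y (Or.inr (Or.inl rfl)) rfl
  have hxy : x ≠ y := fun h => hxy' h
  have hxmem : x ∈ l₁ ++ x :: y :: l₂ := by simp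
  have hymem : y ∈ l₁ ++ x :: y :: l₂ := by simp
  have hxA : x ∈ A := by rw [← hA]; simpa using hxmem
  have hyA : y ∈ A := by rw [← hA]; simpa using hymem
  have hx1 : (l₁ ++ x :: y :: l₂).idxOf x = l₁.length := by
    rw [List.idxOf_append_of_notMem hxl₁, List.idxOf_cons_self]; omega
  have hy1 : (l₁ ++ x :: y :: l₂).idxOf y = l₁.length + 1 := by
    rw [List.idxOf_append_of_notMem hyl₁, List.idxOf_cons_ne _ hxy, List.idxOf_cons_self]
  have hx2 : (l₁ ++ y :: x :: l₂).idxOf x = l₁.length + 1 := by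
    rw [List.idxOf_append_of_notMem hxl₁, List.idxOf_cons_ne _ hxy.symm,
      List.idxOf_cons_self]
  have hy2 : (l₁ ++ y :: x :: l₂).idxOf y = l₁.length := by
    rw [List.idxOf_append_of_notMem hyl₁, List.idxOf_cons_self]; omega
  have hset : geoDset A (l₁ ++ x :: y :: l₂) T =
      insert (x, y) (geoDset A (l₁ ++ y :: x :: l₂) T) := by
    ext ⟨u, v⟩
    simp only [geoDset, Finset.mem_filter, Finset.mem_insert, Finset.mem_product, Prod.mk.injEq]
    constructor
    · rintro ⟨⟨huA, hvA⟩, h3, h4⟩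
      by_cases hc1 : u = x ∧ v = y
      · exact Or.inl hc1
      by_cases hc2 : u = y ∧ v = x
      · obtain ⟨rfl, rfl⟩ := hc2; omega
      · refine Or.inr ⟨⟨huA, hvA⟩, ?_, h4⟩
        have humem : u ∈ l₁ ++ x :: y :: l₂ := by
          rw [← List.mem_toFinset, hA]; exact huA
        have hvmem : v ∈ l₁ ++ x :: y :: l₂ := by
          rw [← List.mem_toFinset, hA]; exact hvA
        exact (geo_order_preserved l₁ l₂ x y u v hnd humem hvmem hc1 hc2).1 h3
    · rintro (⟨rfl, rfl⟩ | ⟨⟨huA, hvA⟩, h3, h4⟩)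
      · exact ⟨⟨hxA, hyA⟩, by omega, hT⟩
      · by_cases hc1 : u = x ∧ v = y
        · obtain ⟨rfl, rfl⟩ := hc1; exact ⟨⟨huA, hvA⟩, by omega, h4⟩
        by_cases hc2 : u = y ∧ v = x
        · obtain ⟨rfl, rfl⟩ := hc2; omega
        · refine ⟨⟨huA, hvA⟩, ?_, h4⟩
          have humem : u ∈ l₁ ++ x :: y :: l₂ := by
            rw [← List.mem_toFinset, hA]; exact huA
          have hvmem : v ∈ l₁ ++ x :: y :: l₂ := by
            rw [← List.mem_toFinset, hA]; exact hvA
          exact (geo_order_preserved l₁ l₂ x y u v hnd humem hvmem hc1 hc2).2 h3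
  have hnotmem : (x, y) ∉ geoDset A (l₁ ++ y :: x :: l₂) T := by
    simp only [geoDset, Finset.mem_filter]
    rintro ⟨-, h3, -⟩
    omega
  rw [geoD, geoD, hset, Finset.card_insert_of_notMem hnotmem]

lemma geo_alike_perm {R T : List α} (h : Alike R T) : R.Perm T := by
  obtain ⟨l₁, l₂, x, y, hxy, rfl, rfl⟩ := h
  exact List.Perm.append_left l₁ (List.Perm.swap y x l₂)

lemma geo_alike_le (A : Finset α) {R R' T : List α} (hR : R.Nodup)
    (hA : R.toFinset = A) (hT : T.Nodup) (hTA : T.toFinset = A) (h : Alike R R') :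
    geoD A R T ≤ geoD A R' T + 1 := by
  obtain ⟨l₁, l₂, x, y, hxy, rfl, rfl⟩ := h
  have hxT : x ∈ T := by rw [← List.mem_toFinset, hTA, ← hA]; simp
  have hyT : y ∈ T := by rw [← List.mem_toFinset, hTA, ← hA]; simp
  have hne := geo_index_ne hT hxT hyT hxy
  rcases lt_or_gt_of_ne hne with hlt | hgt
  · -- x before y in T : swapping back increases, i.e. geoD R' = geoD R + 1
    have hperm : (l₁ ++ x :: y :: l₂).Perm (l₁ ++ y :: x :: l₂) :=
      List.Perm.append_left l₁ (List.Perm.swap y x l₂)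
    have := geoD_swap A l₁ l₂ y x T (hperm.nodup hR)
      (by rw [← hA]; exact List.toFinset_eq_of_perm _ _ hperm.symm) hlt
    omega
  · have := geoD_swap A l₁ l₂ x y T hR hA hgt
    omega

lemma geo_path_linOrd {A : Finset α} {P : List (List α)} {R T : List α}
    (h : IsPath A P R T) : IsLinOrd A R ∧ IsLinOrd A T := by
  obtain ⟨⟨hne, hmem, hch⟩, hh, hl⟩ := h
  constructor
  · exact hmem R (List.mem_of_mem_head? hh)
  · exact hmem T (List.mem_of_mem_getLast? hl)

/-- Lower bound: every path has length at least the discordance plus one. -/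
lemma geo_path_length_lb (A : Finset α) :
    ∀ (P : List (List α)) (R T : List α), IsPath A P R T → geoD A R T + 1 ≤ P.length := by
  intro P
  induction P with
  | nil => intro R T h; exact absurd rfl h.1.1
  | cons a tl ih =>
    intro R T h
    obtain ⟨⟨hne, hmem, hch⟩, hh, hl⟩ := h
    have haR : a = R := by simpa using hh
    subst haR
    cases tl with
    | nil =>
      obtain rfl : a = T := by simpa using hl
      simp [geoD_self]
    | cons b tl' =>
      have hab : Alike a b := (List.isChain_cons_cons.1 hch).1
      have hpath : IsPath A (b :: tl') b T := by
        refine ⟨⟨by simp, fun l hlm => hmem l (by simp [hlm]), (List.isChain_cons_cons.1 hch).2⟩,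
          rfl, ?_⟩
        rw [← hl, List.getLast?_cons_cons]
      have hrec := ih b T hpath
      have hlinA : IsLinOrd A a := hmem a (by simp)
      have hlinT : IsLinOrd A T := (geo_path_linOrd hpath).2
      have hstep := geo_alike_le A hlinA.1 hlinA.2 hlinT.1 hlinT.2 hab
      simp only [List.length_cons] at *
      omega

/-- Concatenation of paths sharing an endpoint. -/
lemma geo_path_append {A : Finset α} {P Q : List (List α)} {R S T : List α}
    (hP : IsPath A P R S) (hQ : IsPath A Q S T) : IsPath A (P ++ Q.tail) R T := by
  obtain ⟨⟨hPne, hPmem, hPch⟩, hPh, hPl⟩ := hP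
  obtain ⟨⟨hQne, hQmem, hQch⟩, hQh, hQl⟩ := hQ
  obtain ⟨S', Q', rfl⟩ : ∃ S' Q', Q = S' :: Q' := by
    cases Q with
    | nil => exact absurd rfl hQne
    | cons a b => exact ⟨a, b, rfl⟩
  have hS' : S' = S := by simpa using hQh
  subst hS'
  refine ⟨⟨by simp [hPne], ?_, ?_⟩, ?_, ?_⟩
  · intro l hlm
    rcases List.mem_append.1 hlm with h | h
    · exact hPmem l h
    · exact hQmem l (List.mem_of_mem_tail h)
  · refine List.isChain_append.2 ⟨hPch, (List.isChain_cons.1 hQch).2, ?_⟩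
    intro p hp q hq
    rw [hPl] at hp
    obtain rfl : S' = p := by simpa using hp
    exact (List.isChain_cons.1 hQch).1 q hq
  · rw [List.head?_append_of_ne_nil _ hPne]
    exact hPh
  · cases Q' with
    | nil =>
      simp only [List.tail_cons, List.append_nil]
      rw [hPl]
      simpa using hQl
    | cons c Q'' =>
      simp only [List.tail_cons]
      rw [List.getLast?_append_of_ne_nil _ (by simp : (c :: Q'' : List (List α)) ≠ [])]
      rw [← hQl, List.getLast?_cons_cons]

lemma geo_find_zip_same (l₁ : List α) (r r' : List α) :
    ((l₁ ++ r).zip (l₁ ++ r')).find? (fun p => decide (p.1 ≠ p.2)) =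
    (r.zip r').find? (fun p => decide (p.1 ≠ p.2)) := by
  induction l₁ with
  | nil => rfl
  | cons a l ih =>
    simp only [List.cons_append, List.zip_cons_cons]
    rw [List.find?_cons_of_neg (p := fun p : α × α => decide (p.1 ≠ p.2)) (a := (a, a)) (by simp)]
    exact ih

lemma geo_switchPair_alike (l₁ l₂ : List α) (x y : α) (hxy : x ≠ y) :
    switchPair? (l₁ ++ x :: y :: l₂) (l₁ ++ y :: x :: l₂) = some (Sym2.mk x y) := by
  unfold switchPair?
  rw [geo_find_zip_same, List.zip_cons_cons,
    List.find?_cons_of_pos (p := fun p : α × α => decide (p.1 ≠ p.2)) (a := (x, y)) (by simpa using hxy)]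
  rfl

lemma geo_switchSeq_cons_cons (a b : List α) (l : List (List α)) :
    switchSeq (a :: b :: l) = (switchPair? a b).toList ++ switchSeq (b :: l) := by
  unfold switchSeq
  simp only [List.tail_cons, List.zip_cons_cons, List.filterMap_cons]
  cases h : switchPair? a b <;> simp

/-- If the relative order of a pair flips along a path, then the pair is a
switching pair of the path. -/
lemma geo_flip_mem_switchSeq (A : Finset α) :
    ∀ (P : List (List α)) (R T : List α), IsPath A P R T → ∀ u v : α, u ∈ A → v ∈ A →
      R.idxOf u < R.idxOf v → T.idxOf v < T.idxOf u →
      Sym2.mk u v ∈ switchSeq P := by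
  intro P
  induction P with
  | nil => intro R T h; exact absurd rfl h.1.1
  | cons a tl ih =>
    intro R T h u v huA hvA hR hT
    obtain ⟨⟨hne, hmem, hch⟩, hh, hl⟩ := h
    obtain rfl : a = R := by simpa using hh
    cases tl with
    | nil =>
      obtain rfl : a = T := by simpa using hl
      omega
    | cons b tl' =>
      have hab : Alike a b := (List.isChain_cons_cons.1 hch).1
      obtain ⟨l₁, l₂, x, y, hxy, ha, hb⟩ := hab
      have hlina : IsLinOrd A a := hmem a (by simp)
      have hua : u ∈ a := by rw [← List.mem_toFinset, hlina.2]; exact huA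
      have hva : v ∈ a := by rw [← List.mem_toFinset, hlina.2]; exact hvA
      subst ha hb
      rw [geo_switchSeq_cons_cons, geo_switchPair_alike l₁ l₂ x y hxy]
      by_cases hc1 : u = x ∧ v = y
      · obtain ⟨rfl, rfl⟩ := hc1; simp
      by_cases hc2 : u = y ∧ v = x
      · obtain ⟨rfl, rfl⟩ := hc2
        simp [Sym2.eq_swap]
      · have hpres := geo_order_preserved l₁ l₂ x y u v hlina.1 hua hva hc1 hc2
        have := ih (l₁ ++ y :: x :: l₂) T ⟨⟨by simp, fun l hlm => hmem l (by simp [hlm]),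
          (List.isChain_cons_cons.1 hch).2⟩, rfl, by rw [← hl, List.getLast?_cons_cons]⟩
          u v huA hvA (hpres.1 hR) hT
        simp only [List.mem_append, Option.toList_some, List.mem_cons]
        right
        exact this

lemma geo_alike_cons {R T : List α} (s : α) (h : Alike R T) : Alike (s :: R) (s :: T) := by
  obtain ⟨l₁, l₂, x, y, hxy, rfl, rfl⟩ := h
  exact ⟨s :: l₁, l₂, x, y, hxy, rfl, rfl⟩

lemma geo_geoD_cons (A A' : Finset α) (s : α) (M S' : List α)
    (hA : A = insert s A') (hsA' : s ∉ A') :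
    geoD A (s :: M) (s :: S') = geoD A' M S' := by
  unfold geoD
  congr 1
  ext ⟨u, v⟩
  simp only [geoDset, Finset.mem_filter, Finset.mem_product]
  constructor
  · rintro ⟨⟨huA, hvA⟩, h1, h2⟩
    have hus : u ≠ s := by
      rintro rfl
      rw [List.idxOf_cons_self] at h2
      omega
    have hvs : v ≠ s := by
      rintro rfl
      rw [List.idxOf_cons_self] at h1
      omega
    rw [List.idxOf_cons_ne _ (Ne.symm hus), List.idxOf_cons_ne _ (Ne.symm hvs)] at h1
    rw [List.idxOf_cons_ne _ (Ne.symm hus), List.idxOf_cons_ne _ (Ne.symm hvs)] at h2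
    refine ⟨⟨?_, ?_⟩, by omega, by omega⟩
    · rw [hA] at huA
      exact (Finset.mem_insert.1 huA).resolve_left hus
    · rw [hA] at hvA
      exact (Finset.mem_insert.1 hvA).resolve_left hvs
  · rintro ⟨⟨huA, hvA⟩, h1, h2⟩
    have hus : u ≠ s := fun h => hsA' (h ▸ huA)
    have hvs : v ≠ s := fun h => hsA' (h ▸ hvA)
    refine ⟨⟨by rw [hA]; exact Finset.mem_insert_of_mem huA,
      by rw [hA]; exact Finset.mem_insert_of_mem hvA⟩, ?_, ?_⟩
    · rw [List.idxOf_cons_ne _ (Ne.symm hus), List.idxOf_cons_ne _ (Ne.symm hvs)]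
      omega
    · rw [List.idxOf_cons_ne _ (Ne.symm hus), List.idxOf_cons_ne _ (Ne.symm hvs)]
      omega

/-- Bubble move: bring `s` to the front by adjacent swaps, each decreasing the
discordance with any order having `s` on top. -/
lemma geo_bubble (A : Finset α) (s : α) (S' : List α) (r₁ : List α) :
    ∀ (r₂ : List α), IsLinOrd A (r₁ ++ s :: r₂) →
    ∃ P : List (List α), IsPath A P (r₁ ++ s :: r₂) (s :: (r₁ ++ r₂)) ∧
      P.length = r₁.length + 1 ∧
      geoD A (r₁ ++ s :: r₂) (s :: S') = geoD A (s :: (r₁ ++ r₂)) (s :: S') + r₁.length := by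
  induction r₁ using List.reverseRecOn with
  | nil =>
    intro r₂ hlin
    exact ⟨[s :: r₂], ⟨⟨by simp, by simpa using hlin, List.isChain_singleton _⟩, rfl, rfl⟩,
      rfl, by simp⟩
  | append_singleton r₁' u ih =>
    intro r₂ hlin
    simp only [List.append_assoc, List.singleton_append, List.length_append,
      List.length_singleton] at hlin ⊢
    have hnd := hlin.1
    have hus : u ≠ s := by
      simp only [List.nodup_append, List.nodup_cons, List.mem_cons, List.disjoint_cons_right,
        not_or] at hnd
      exact fun h => hnd.2.1.1.1 h
    have hperm : (r₁' ++ u :: s :: r₂).Perm (r₁' ++ s :: u :: r₂) :=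
      List.Perm.append_left r₁' (List.Perm.swap s u r₂)
    have hlin' : IsLinOrd A (r₁' ++ s :: u :: r₂) :=
      ⟨hperm.nodup hlin.1, by rw [← hlin.2]; exact List.toFinset_eq_of_perm _ _ hperm.symm⟩
    obtain ⟨P', hP', hlen', hD'⟩ := ih (u :: r₂) hlin'
    have hswap : geoD A (r₁' ++ u :: s :: r₂) (s :: S') =
        geoD A (r₁' ++ s :: u :: r₂) (s :: S') + 1 := by
      refine geoD_swap A r₁' r₂ u s (s :: S') hlin.1 hlin.2 ?_
      rw [List.idxOf_cons_self, List.idxOf_cons_ne _ (Ne.symm hus)]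
      omega
    have hmem2 : ∀ l ∈ [r₁' ++ u :: s :: r₂, r₁' ++ s :: u :: r₂], IsLinOrd A l := by
      intro l hl
      simp only [List.mem_cons, List.not_mem_nil, or_false] at hl
      rcases hl with rfl | rfl
      · exact hlin
      · exact hlin'
    have hpair : IsPath A [r₁' ++ u :: s :: r₂, r₁' ++ s :: u :: r₂]
        (r₁' ++ u :: s :: r₂) (r₁' ++ s :: u :: r₂) :=
      ⟨⟨by simp, hmem2, List.isChain_pair.2 ⟨r₁', r₂, u, s, hus, rfl, rfl⟩⟩, rfl, rfl⟩
    have htot := geo_path_append hpair hP'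
    have hPne : P' ≠ [] := hP'.1.1
    have hPlen : P'.tail.length = P'.length - 1 := List.length_tail
    refine ⟨_, htot, ?_, by omega⟩
    have : P'.length ≥ 1 := List.length_pos_iff.2 hPne
    simp only [List.length_append, List.length_cons, List.length_nil]
    omega

/-- There is a path of length exactly the discordance plus one between any two
linear orders on `A`. -/
lemma geo_exists_path (S : List α) :
    ∀ (A : Finset α) (R : List α), IsLinOrd A R → IsLinOrd A S →
      ∃ P : List (List α), IsPath A P R S ∧ P.length = geoD A R S + 1 := by
  induction S with
  | nil =>
    intro A R hR hS
    have hA : A = ∅ := by rw [← hS.2]; simp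
    have hRnil : R = [] := by
      rw [← List.toFinset_eq_empty_iff]
      rw [hR.2, hA]
    subst hRnil
    exact ⟨[[]], ⟨⟨by simp, by simpa using hR, List.isChain_singleton _⟩, rfl, rfl⟩,
      by simp [geoD_self]⟩
  | cons s S' ih =>
    intro A R hR hS
    have hsA : s ∈ A := by rw [← hS.2]; simp
    have hsR : s ∈ R := by rw [← List.mem_toFinset, hR.2]; exact hsA
    obtain ⟨r₁, r₂, rfl⟩ := List.append_of_mem hsR
    obtain ⟨P₁, hP₁, hlen₁, hD₁⟩ := geo_bubble A s S' r₁ r₂ hR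
    set A' := S'.toFinset with hA'
    have hsS' : s ∉ S' := by
      have := hS.1
      simp only [List.nodup_cons] at this
      exact this.1
    have hsA' : s ∉ A' := by simp [hA', hsS']
    have hAins : A = insert s A' := by
      rw [← hS.2]; simp [hA']
    have hpermR : (r₁ ++ s :: r₂).Perm (s :: (r₁ ++ r₂)) := List.perm_middle
    have hndsM : (s :: (r₁ ++ r₂)).Nodup := hpermR.nodup hR.1
    have hsM : s ∉ r₁ ++ r₂ := (List.nodup_cons.1 hndsM).1
    have hMnd : (r₁ ++ r₂).Nodup := (List.nodup_cons.1 hndsM).2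
    have htfM : (r₁ ++ r₂).toFinset = A' := by
      have h1 : (s :: (r₁ ++ r₂)).toFinset = A := by
        rw [← hR.2]; exact List.toFinset_eq_of_perm _ _ hpermR.symm
      simp only [List.toFinset_cons] at h1
      have := congrArg (fun t => Finset.erase t s) h1
      rw [Finset.erase_insert (by simp only [List.mem_toFinset]; exact hsM)] at this
      rw [this, hAins, Finset.erase_insert hsA']
    have hMlin : IsLinOrd A' (r₁ ++ r₂) := ⟨hMnd, htfM⟩
    have hS'lin : IsLinOrd A' S' := ⟨(List.nodup_cons.1 hS.1).2, rfl⟩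
    obtain ⟨P₂, hP₂, hlen₂⟩ := ih A' (r₁ ++ r₂) hMlin hS'lin
    -- lift P₂ by consing s
    obtain ⟨⟨hne₂, hmem₂, hch₂⟩, hh₂, hl₂⟩ := hP₂
    have hP₂' : IsPath A (P₂.map (s :: ·)) (s :: (r₁ ++ r₂)) (s :: S') := by
      refine ⟨⟨by simp [hne₂], ?_, ?_⟩, ?_, ?_⟩
      · intro l hl
        obtain ⟨m, hm, rfl⟩ := List.mem_map.1 hl
        have hml := hmem₂ m hm
        refine ⟨?_, ?_⟩
        · rw [List.nodup_cons]
          exact ⟨fun hc => hsA' (hml.2 ▸ List.mem_toFinset.2 hc), hml.1⟩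
        · rw [List.toFinset_cons, hml.2, hAins]
      · exact List.isChain_map_of_isChain _ (fun a b h => geo_alike_cons s h) hch₂
      · rw [List.head?_map, hh₂]; rfl
      · rw [List.getLast?_map, hl₂]; rfl
    have hDcons : geoD A (s :: (r₁ ++ r₂)) (s :: S') = geoD A' (r₁ ++ r₂) S' :=
      geo_geoD_cons A A' s _ _ hAins hsA'
    have htot := geo_path_append hP₁ hP₂'
    refine ⟨_, htot, ?_⟩
    have hne₂' : P₂.map (s :: ·) ≠ [] := by simp [hne₂]
    have h2 : (P₂.map (s :: ·)).length = P₂.length := List.length_map _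
    have h3 : ((P₂.map (s :: ·)).tail).length = (P₂.map (s :: ·)).length - 1 :=
      List.length_tail
    have h4 : P₂.length ≥ 1 := List.length_pos_iff.2 hne₂
    simp only [List.length_append]
    omega

end GeoAux

/-- If `𝒜` and `ℬ` are geodesics such that the last member of
`𝒜` is the first member of `ℬ` and their switching pairs are pairwise
distinct, then the concatenation is a geodesic connecting the first member of
`𝒜` and the last member of `ℬ`. -/
theorem geodesic_append [DecidableEq α] (A : Finset α)
    (P Q : List (List α)) (R S T : List α)
    (hP : IsGeodesic A P R S) (hQ : IsGeodesic A Q S T)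
    (hdisj : ∀ p : Sym2 α, p ∈ switchSeq P → p ∉ switchSeq Q) :
    IsGeodesic A (P ++ Q.tail) R T := by
  obtain ⟨hPpath, hPmin⟩ := hP
  obtain ⟨hQpath, hQmin⟩ := hQ
  have hlinR := (geo_path_linOrd hPpath).1
  have hlinS := (geo_path_linOrd hPpath).2
  have hlinT := (geo_path_linOrd hQpath).2
  obtain ⟨P₀, hP₀, hP₀len⟩ := geo_exists_path S A R hlinR hlinS
  obtain ⟨Q₀, hQ₀, hQ₀len⟩ := geo_exists_path T A S hlinS hlinT
  have hPlen : P.length = geoD A R S + 1 :=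
    le_antisymm (hP₀len ▸ hPmin P₀ hP₀) (geo_path_length_lb A P R S hPpath)
  have hQlen : Q.length = geoD A S T + 1 :=
    le_antisymm (hQ₀len ▸ hQmin Q₀ hQ₀) (geo_path_length_lb A Q S T hQpath)
  have hcl1 : geoDset A R S ⊆ geoDset A R T := by
    rintro ⟨u, v⟩ hm
    simp only [geoDset, Finset.mem_filter, Finset.mem_product] at hm ⊢
    obtain ⟨⟨huA, hvA⟩, h1, h2⟩ := hm
    refine ⟨⟨huA, hvA⟩, h1, ?_⟩
    by_contra hc
    have huv : u ≠ v := by rintro rfl; omega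
    have huT : u ∈ T := by rw [← List.mem_toFinset, hlinT.2]; exact huA
    have hvT : v ∈ T := by rw [← List.mem_toFinset, hlinT.2]; exact hvA
    have hne := geo_index_ne hlinT.1 hvT huT (Ne.symm huv)
    have h3 : T.idxOf u < T.idxOf v := by omega
    have e1 := geo_flip_mem_switchSeq A P R S hPpath u v huA hvA h1 h2
    have e2 := geo_flip_mem_switchSeq A Q S T hQpath v u hvA huA h2 h3
    rw [Sym2.eq_swap] at e2
    exact hdisj _ e1 e2
  have hcl2 : geoDset A S T ⊆ geoDset A R T := by
    rintro ⟨u, v⟩ hm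
    simp only [geoDset, Finset.mem_filter, Finset.mem_product] at hm ⊢
    obtain ⟨⟨huA, hvA⟩, h1, h2⟩ := hm
    refine ⟨⟨huA, hvA⟩, ?_, h2⟩
    by_contra hc
    have huv : u ≠ v := by rintro rfl; omega
    have huR : u ∈ R := by rw [← List.mem_toFinset, hlinR.2]; exact huA
    have hvR : v ∈ R := by rw [← List.mem_toFinset, hlinR.2]; exact hvA
    have hne := geo_index_ne hlinR.1 hvR huR (Ne.symm huv)
    have h3 : R.idxOf v < R.idxOf u := by omega
    have e1 := geo_flip_mem_switchSeq A P R S hPpath v u hvA huA h3 h1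
    have e2 := geo_flip_mem_switchSeq A Q S T hQpath u v huA hvA h1 h2
    rw [Sym2.eq_swap] at e1
    exact hdisj _ e1 e2
  have hdisjset : Disjoint (geoDset A R S) (geoDset A S T) := by
    rw [Finset.disjoint_left]
    rintro ⟨u, v⟩ h1 h2
    simp only [geoDset, Finset.mem_filter, Finset.mem_product] at h1 h2
    omega
  have hcard : geoD A R S + geoD A S T ≤ geoD A R T := by
    have hsub : geoDset A R S ∪ geoDset A S T ⊆ geoDset A R T :=
      Finset.union_subset hcl1 hcl2
    have := Finset.card_le_card hsub
    rwa [Finset.card_union_of_disjoint hdisjset] at this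
  have hpath := geo_path_append hPpath hQpath
  refine ⟨hpath, ?_⟩
  intro Q' hQ'
  have hlb := geo_path_length_lb A Q' R T hQ'
  have hQne : Q ≠ [] := hQpath.1.1
  have h4 : Q.length ≥ 1 := List.length_pos_iff.2 hQne
  have h5 : Q.tail.length = Q.length - 1 := List.length_tail
  simp only [List.length_append]
  omega
end

section
/- Let 𝒜 be a path of alike linear orders on L(A) and let a, b, c ∈ A be distinct alternatives. Then the number of occurrences of the switching pair (a,b) in S(𝒜) equals the number of occurrences of the switching pair (a,b) in S(𝒜_{{a,b,c}}). -/
/-!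
Common definitions for formalizing Condorcet domains.

A linear order on a finite set `A : Finset α` of alternatives is encoded as a
duplicate-free list enumerating the elements of `A` from most preferred (head)
to least preferred (last).
-/

variable {α : Type*}

lemma switchPair?_append [DecidableEq α] (l : List α) (u v : List α) :
    switchPair? (l ++ u) (l ++ v) = switchPair? u v := by
  induction l with
  | nil => rfl
  | cons z l ih => simp [switchPair?, List.find?] at ih ⊢; exact ih

lemma switchPair?_self [DecidableEq α] (l : List α) : switchPair? l l = none := by
  have := switchPair?_append l ([] : List α) ([] : List α)
  simpa [show switchPair? ([] : List α) [] = none from rfl] using this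

lemma switchPair?_swap [DecidableEq α] {x y : α} (h : x ≠ y) (l : List α) :
    switchPair? (x :: y :: l) (y :: x :: l) = some s(x, y) := by
  simp [switchPair?, List.find?, h]

lemma switchSeq_cons_cons [DecidableEq α] (x y : List α) (t : List (List α)) :
    switchSeq (x :: y :: t) = (switchPair? x y).toList ++ switchSeq (y :: t) := by
  cases h : switchPair? x y <;> simp [switchSeq, List.filterMap_cons, h]

lemma switchSeq_destutter' [DecidableEq α] :
    ∀ (l : List (List α)) (a : List α),
      switchSeq (List.destutter' (· ≠ ·) a l) = switchSeq (a :: l) := by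
  intro l
  induction l with
  | nil => intro a; rfl
  | cons b l ih =>
    intro a
    by_cases hab : a ≠ b
    · rw [List.destutter'_cons_pos _ hab]
      obtain ⟨t, ht⟩ : ∃ t, List.destutter' (α := List α) (· ≠ ·) b l = b :: t := by
        clear ih hab a
        induction l generalizing b with
        | nil => exact ⟨[], rfl⟩
        | cons c l ih2 =>
          by_cases hbc : b ≠ c
          · rw [List.destutter'_cons_pos _ hbc]
            exact ⟨_, rfl⟩
          · rw [List.destutter'_cons_neg _ hbc]; exact ih2 b
      rw [ht, switchSeq_cons_cons, ← ht, ih, switchSeq_cons_cons]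
    · rw [List.destutter'_cons_neg _ hab, ih]
      push_neg at hab
      subst hab
      rw [switchSeq_cons_cons, switchPair?_self]
      rfl

lemma switchSeq_destutter [DecidableEq α] (Q : List (List α)) :
    switchSeq (Q.destutter (· ≠ ·)) = switchSeq Q := by
  cases Q with
  | nil => rfl
  | cons a l => exact switchSeq_destutter' l a

lemma count_switchSeq_map_restrict [DecidableEq α] (B : Finset α) {a b : α}
    (hab : a ≠ b) (haB : a ∈ B) (hbB : b ∈ B) :
    ∀ P : List (List α), P.Chain' Alike →
      (switchSeq (P.map (fun l => restrictOrd l B))).count s(a, b) =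
        (switchSeq P).count s(a, b) := by
  intro P
  induction P with
  | nil => intro _; rfl
  | cons R rest ih =>
    intro hch
    cases rest with
    | nil => rfl
    | cons T rest' =>
      rw [List.Chain', List.isChain_cons_cons] at hch
      obtain ⟨hRT, hch'⟩ := hch
      obtain ⟨l₁, l₂, x, y, hxy, hR, hT⟩ := hRT
      have hsp : switchPair? R T = some s(x, y) := by
        rw [hR, hT, switchPair?_append, switchPair?_swap hxy]
      have ih' := ih hch'
      simp only [List.map_cons] at ih'
      rw [List.map_cons, List.map_cons, switchSeq_cons_cons, switchSeq_cons_cons,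
        List.count_append, List.count_append, ih', hsp]
      by_cases hx : x ∈ B <;> by_cases hy : y ∈ B
      · have : switchPair? (restrictOrd R B) (restrictOrd T B) = some s(x, y) := by
          rw [hR, hT]
          simp only [restrictOrd, List.filter_append, List.filter_cons, hx, hy,
            decide_eq_true_eq, if_true]
          rw [switchPair?_append, switchPair?_swap hxy]
        rw [this]
      all_goals {
        have hne : s(x, y) ≠ s(a, b) := by
          intro h
          rcases Sym2.eq_iff.mp h with ⟨rfl, rfl⟩ | ⟨rfl, rfl⟩ <;> simp_all
        have heq : restrictOrd R B = restrictOrd T B := by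
          rw [hR, hT]
          simp only [restrictOrd, List.filter_append, List.filter_cons]
          simp [hx, hy]
        rw [heq, switchPair?_self]
        simp [List.count_cons, hne]
      }

/-- For a path `𝒜` of alike linear orders on `L(A)` and distinct
`a,b,c ∈ A`, the number of occurrences of the switching pair `(a,b)` in `S(𝒜)`
equals its number of occurrences in `S(𝒜_{{a,b,c}})`. -/
theorem count_switchPair_restrict [DecidableEq α] (A : Finset α)
    (P : List (List α)) (hP : IsPathOn A P) (a b c : α)
    (ha : a ∈ A) (hb : b ∈ A) (hc : c ∈ A)
    (hab : a ≠ b) (hac : a ≠ c) (hbc : b ≠ c) :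
    (switchSeq P).count s(a, b) =
      (switchSeq (restrictPath P {a, b, c})).count s(a, b) := by
  rw [restrictPath, switchSeq_destutter]
  exact (count_switchSeq_map_restrict {a, b, c} hab (by simp) (by simp) P hP.2.2).symm
end

section
/- Let D ⊆ L(A) be a peak-pit Condorcet domain. Then for all distinct a, b, c ∈ A and all R, T ∈ D_{{a,b,c}}, there is a geodesic 𝒜 on L({a,b,c}) connecting R and T such that D_{{a,b,c}} ∪ K(𝒜) is a peak-pit Condorcet domain. -/
/-!
Common definitions for formalizing Condorcet domains.

A linear order on a finite set `A : Finset α` of alternatives is encoded as a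
duplicate-free list enumerating the elements of `A` from most preferred (head)
to least preferred (last).
-/

variable {α : Type*}

section AuxForProof

lemma alike_symm' {R T : List α} (h : Alike R T) : Alike T R := by
  obtain ⟨l₁, l₂, x, y, hxy, h1, h2⟩ := h
  exact ⟨l₁, l₂, y, x, hxy.symm, h2, h1⟩

lemma alike_ne' {R T : List α} (h : Alike R T) : R ≠ T := by
  obtain ⟨l₁, l₂, x, y, hxy, rfl, rfl⟩ := h
  intro h
  have := List.append_cancel_left h
  simp at this
  exact hxy this.1

lemma alike_three {p q r : α} {M : List α} :
    Alike [p, q, r] M ↔ (p ≠ q ∧ M = [q, p, r]) ∨ (q ≠ r ∧ M = [p, r, q]) := by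
  constructor
  · rintro ⟨l₁, l₂, x, y, hxy, h1, h2⟩
    rcases l₁ with _ | ⟨e, _ | ⟨f, l⟩⟩
    · simp only [List.nil_append] at h1 h2
      obtain ⟨rfl, rfl, rfl⟩ : p = x ∧ q = y ∧ [r] = l₂ := by simpa using h1
      exact Or.inl ⟨hxy, by simpa using h2⟩
    · simp only [List.cons_append, List.nil_append] at h1 h2
      obtain ⟨rfl, rfl, rfl, rfl⟩ : p = e ∧ q = x ∧ r = y ∧ [] = l₂ := by simpa using h1
      exact Or.inr ⟨hxy, by simpa using h2⟩
    · exfalso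
      have := congrArg List.length h1
      simp at this
      omega
  · rintro (⟨h, rfl⟩ | ⟨h, rfl⟩)
    · exact ⟨[], [r], p, q, h, rfl, rfl⟩
    · exact ⟨[p], [], q, r, h, rfl, rfl⟩

lemma linOrd_three [DecidableEq α] {u v w : α} (huv : u ≠ v) (huw : u ≠ w) (hvw : v ≠ w)
    {l : List α} (h : IsLinOrd {u, v, w} l) :
    l = [u,v,w] ∨ l = [u,w,v] ∨ l = [v,u,w] ∨ l = [v,w,u] ∨ l = [w,u,v] ∨ l = [w,v,u] := by
  obtain ⟨hnd, hset⟩ := h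
  have hcard : ({u,v,w} : Finset α).card = 3 :=
    Finset.card_eq_three.mpr ⟨u, v, w, huv, huw, hvw, rfl⟩
  have hlen : l.length = 3 := by
    rw [← List.toFinset_card_of_nodup hnd, hset, hcard]
  rcases l with _ | ⟨x, _ | ⟨y, _ | ⟨z, _ | ⟨d, l⟩⟩⟩⟩ <;> simp at hlen
  have hx : x = u ∨ x = v ∨ x = w := by
    have : x ∈ ({u,v,w} : Finset α) := by rw [← hset]; simp
    simpa using this
  have hy : y = u ∨ y = v ∨ y = w := by
    have : y ∈ ({u,v,w} : Finset α) := by rw [← hset]; simp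
    simpa using this
  have hz : z = u ∨ z = v ∨ z = w := by
    have : z ∈ ({u,v,w} : Finset α) := by rw [← hset]; simp
    simpa using this
  simp only [List.nodup_cons, List.mem_cons, List.not_mem_nil, or_false,
    List.nodup_nil, and_true, not_or] at hnd
  rcases hx with rfl | rfl | rfl <;> rcases hy with rfl | rfl | rfl <;>
    rcases hz with rfl | rfl | rfl <;> simp_all

lemma path_len_two [DecidableEq α] {A₃ : Finset α} {Q : List (List α)} {R T : List α}
    (h : IsPath A₃ Q R T) (hne : R ≠ T) : 2 ≤ Q.length := by
  obtain ⟨⟨hQne, -, hch⟩, hh, hl⟩ := h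
  rcases Q with _ | ⟨q₀, _ | ⟨q₁, q⟩⟩
  · exact absurd rfl hQne
  · simp at hh hl
    exact absurd (hh.symm.trans hl) hne
  · simp only [List.length_cons]; omega

lemma path_len_three [DecidableEq α] {A₃ : Finset α} {Q : List (List α)} {R T : List α}
    (h : IsPath A₃ Q R T) (hne : R ≠ T) (hnal : ¬ Alike R T) : 3 ≤ Q.length := by
  obtain ⟨⟨hQne, -, hch⟩, hh, hl⟩ := h
  rcases Q with _ | ⟨q₀, _ | ⟨q₁, _ | ⟨q₂, q⟩⟩⟩
  · exact absurd rfl hQne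
  · simp at hh hl
    exact absurd (hh.symm.trans hl) hne
  · simp [List.Chain', List.isChain_cons_cons] at hh hl hch
    subst hh; subst hl
    exact absurd hch hnal
  · simp only [List.length_cons]; omega

lemma path_len_four [DecidableEq α] {A₃ : Finset α} {Q : List (List α)} {R T : List α}
    (h : IsPath A₃ Q R T) (hne : R ≠ T) (hnal : ¬ Alike R T)
    (hno : ∀ M, ¬ (Alike R M ∧ Alike M T)) : 4 ≤ Q.length := by
  obtain ⟨⟨hQne, -, hch⟩, hh, hl⟩ := h
  rcases Q with _ | ⟨q₀, _ | ⟨q₁, _ | ⟨q₂, _ | ⟨q₃, q⟩⟩⟩⟩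
  · exact absurd rfl hQne
  · simp at hh hl
    exact absurd (hh.symm.trans hl) hne
  · simp [List.Chain', List.isChain_cons_cons] at hh hl hch
    subst hh; subst hl
    exact absurd hch hnal
  · simp [List.Chain', List.isChain_cons_cons] at hh hl hch
    subst hh; subst hl
    exact absurd ⟨hch.1, hch.2⟩ (hno q₁)
  · simp only [List.length_cons]; omega

lemma geo_one [DecidableEq α] {A₃ : Finset α} {R : List α} (h : IsLinOrd A₃ R) :
    IsGeodesic A₃ [R] R R := by
  refine ⟨⟨⟨by simp, by simpa using h, by simp [List.Chain']⟩, by simp, by simp⟩, ?_⟩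
  intro Q hQ
  simpa [Nat.one_le_iff_ne_zero, Nat.pos_iff_ne_zero] using List.length_pos_iff.mpr hQ.1.1

lemma geo_two [DecidableEq α] {A₃ : Finset α} {R T : List α}
    (hR : IsLinOrd A₃ R) (hT : IsLinOrd A₃ T) (hA : Alike R T) :
    IsGeodesic A₃ [R, T] R T := by
  refine ⟨⟨⟨by simp, ?_, by simp [List.Chain', hA]⟩, by simp, by simp⟩, ?_⟩
  · intro l hl; simp at hl; rcases hl with rfl | rfl; exacts [hR, hT]
  · intro Q hQ
    simpa using path_len_two hQ (alike_ne' hA)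

lemma geo_three [DecidableEq α] {A₃ : Finset α} {R M T : List α}
    (hR : IsLinOrd A₃ R) (hM : IsLinOrd A₃ M) (hT : IsLinOrd A₃ T)
    (h1 : Alike R M) (h2 : Alike M T) (hne : R ≠ T) (hnal : ¬ Alike R T) :
    IsGeodesic A₃ [R, M, T] R T := by
  refine ⟨⟨⟨by simp, ?_, by simp [List.Chain', h1, h2]⟩, by simp, by simp⟩, ?_⟩
  · intro l hl; simp at hl; rcases hl with rfl | rfl | rfl; exacts [hR, hM, hT]
  · intro Q hQ
    simpa using path_len_three hQ hne hnal

lemma geo_four [DecidableEq α] {A₃ : Finset α} {R M N T : List α}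
    (hR : IsLinOrd A₃ R) (hM : IsLinOrd A₃ M) (hN : IsLinOrd A₃ N) (hT : IsLinOrd A₃ T)
    (h1 : Alike R M) (h2 : Alike M N) (h3 : Alike N T) (hne : R ≠ T) (hnal : ¬ Alike R T)
    (hno : ∀ M', ¬ (Alike R M' ∧ Alike M' T)) :
    IsGeodesic A₃ [R, M, N, T] R T := by
  refine ⟨⟨⟨by simp, ?_, by simp [List.Chain', h1, h2, h3]⟩, by simp, by simp⟩, ?_⟩
  · intro l hl; simp at hl; rcases hl with rfl | rfl | rfl | rfl; exacts [hR, hM, hN, hT]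
  · intro Q hQ
    simpa using path_len_four hQ hne hnal hno

lemma quad_geodesic [DecidableEq α] {A₃ : Finset α} {L1 L2 L3 L4 R T : List α}
    (h1 : IsLinOrd A₃ L1) (h2 : IsLinOrd A₃ L2) (h3 : IsLinOrd A₃ L3) (h4 : IsLinOrd A₃ L4)
    (a12 : Alike L1 L2) (a23 : Alike L2 L3) (a34 : Alike L3 L4)
    (n13 : ¬ Alike L1 L3) (n24 : ¬ Alike L2 L4) (n14 : ¬ Alike L1 L4)
    (d13 : L1 ≠ L3) (d24 : L2 ≠ L4) (d14 : L1 ≠ L4)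
    (nm : ∀ M, ¬ (Alike L1 M ∧ Alike M L4))
    (hR : R = L1 ∨ R = L2 ∨ R = L3 ∨ R = L4)
    (hT : T = L1 ∨ T = L2 ∨ T = L3 ∨ T = L4) :
    ∃ P : List (List α), IsGeodesic A₃ P R T ∧
      ∀ l ∈ P, l = L1 ∨ l = L2 ∨ l = L3 ∨ l = L4 := by
  have n31 : ¬ Alike L3 L1 := fun h => n13 (alike_symm' h)
  have n42 : ¬ Alike L4 L2 := fun h => n24 (alike_symm' h)
  have n41 : ¬ Alike L4 L1 := fun h => n14 (alike_symm' h)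
  have nm' : ∀ M, ¬ (Alike L4 M ∧ Alike M L1) :=
    fun M h => nm M ⟨alike_symm' h.2, alike_symm' h.1⟩
  rcases hR with h | h | h | h <;> rcases hT with h' | h' | h' | h' <;> rw [h, h']
  · exact ⟨[L1], geo_one h1, by intro l hl; simp at hl; tauto⟩
  · exact ⟨[L1, L2], geo_two h1 h2 a12, by intro l hl; simp at hl; tauto⟩
  · exact ⟨[L1, L2, L3], geo_three h1 h2 h3 a12 a23 d13 n13,
      by intro l hl; simp at hl; tauto⟩
  · exact ⟨[L1, L2, L3, L4], geo_four h1 h2 h3 h4 a12 a23 a34 d14 n14 nm,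
      by intro l hl; simp at hl; tauto⟩
  · exact ⟨[L2, L1], geo_two h2 h1 (alike_symm' a12), by intro l hl; simp at hl; tauto⟩
  · exact ⟨[L2], geo_one h2, by intro l hl; simp at hl; tauto⟩
  · exact ⟨[L2, L3], geo_two h2 h3 a23, by intro l hl; simp at hl; tauto⟩
  · exact ⟨[L2, L3, L4], geo_three h2 h3 h4 a23 a34 d24 n24,
      by intro l hl; simp at hl; tauto⟩
  · exact ⟨[L3, L2, L1], geo_three h3 h2 h1 (alike_symm' a23) (alike_symm' a12)
      (Ne.symm d13) n31, by intro l hl; simp at hl; tauto⟩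
  · exact ⟨[L3, L2], geo_two h3 h2 (alike_symm' a23), by intro l hl; simp at hl; tauto⟩
  · exact ⟨[L3], geo_one h3, by intro l hl; simp at hl; tauto⟩
  · exact ⟨[L3, L4], geo_two h3 h4 a34, by intro l hl; simp at hl; tauto⟩
  · exact ⟨[L4, L3, L2, L1], geo_four h4 h3 h2 h1 (alike_symm' a34) (alike_symm' a23)
      (alike_symm' a12) (Ne.symm d14) n41 nm', by intro l hl; simp at hl; tauto⟩
  · exact ⟨[L4, L3, L2], geo_three h4 h3 h2 (alike_symm' a34) (alike_symm' a23)
      (Ne.symm d24) n42, by intro l hl; simp at hl; tauto⟩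
  · exact ⟨[L4, L3], geo_two h4 h3 (alike_symm' a34), by intro l hl; simp at hl; tauto⟩
  · exact ⟨[L4], geo_one h4, by intro l hl; simp at hl; tauto⟩

lemma isLinOrd_triple [DecidableEq α] {x y z : α} {S : Finset α}
    (hxy : x ≠ y) (hxz : x ≠ z) (hyz : y ≠ z) (hS : ({x, y, z} : Finset α) = S) :
    IsLinOrd S [x, y, z] :=
  ⟨by simp [hxy, hxz, hyz], by rw [← hS]; simp⟩

lemma main_helper [DecidableEq α] {u v w : α} (huv : u ≠ v) (huw : u ≠ w) (hvw : v ≠ w)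
    {E : Set (List α)} (hE : ∀ l ∈ E, IsLinOrd {u, v, w} l)
    (hcond : NeverCond E u 0 ∨ NeverCond E u 2)
    {R T : List α} (hR : R ∈ E) (hT : T ∈ E) :
    ∃ P : List (List α), IsGeodesic {u, v, w} P R T ∧
      (NeverCond (E ∪ {l | l ∈ P}) u 0 ∨ NeverCond (E ∪ {l | l ∈ P}) u 2) := by
  have hvu : v ≠ u := huv.symm
  have hwu : w ≠ u := huw.symm
  have hwv : w ≠ v := hvw.symm
  rcases hcond with hc | hc
  · -- never-top u : allowed orders [v,u,w], [v,w,u], [w,v,u], [w,u,v]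
    have classify : ∀ l ∈ E, l = [v,u,w] ∨ l = [v,w,u] ∨ l = [w,v,u] ∨ l = [w,u,v] := by
      intro l hl
      have h0 := hc l hl
      rcases linOrd_three huv huw hvw (hE l hl) with rfl | rfl | rfl | rfl | rfl | rfl
      · simp at h0
      · simp at h0
      · tauto
      · tauto
      · tauto
      · tauto
    obtain ⟨P, hgeo, hmem⟩ := quad_geodesic (A₃ := {u, v, w})
      (L1 := [v,u,w]) (L2 := [v,w,u]) (L3 := [w,v,u]) (L4 := [w,u,v])
      (isLinOrd_triple hvu hvw huw (by ext t; simp; tauto))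
      (isLinOrd_triple hvw hvu hwu (by ext t; simp; tauto))
      (isLinOrd_triple hwv hwu hvu (by ext t; simp; tauto))
      (isLinOrd_triple hwu hwv huv (by ext t; simp; tauto))
      ⟨[v], [], u, w, huw, rfl, rfl⟩
      ⟨[], [u], v, w, hvw, rfl, rfl⟩
      ⟨[w], [], v, u, hvu, rfl, rfl⟩
      (by rw [alike_three]; simp [hvu, hwu, hwv, huv, huw, hvw])
      (by rw [alike_three]; simp [hvu, hwu, hwv, huv, huw, hvw])
      (by rw [alike_three]; simp [hvu, hwu, hwv, huv, huw, hvw])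
      (by simp [hvu, hwu, hwv, huv, huw, hvw]) (by simp [hvu, hwu, hwv, huv, huw, hvw]) (by simp [hvu, hwu, hwv, huv, huw, hvw])
      (by
        rintro M ⟨hA, hB⟩
        rw [alike_three] at hA
        rcases hA with ⟨-, rfl⟩ | ⟨-, rfl⟩ <;>
          · rw [alike_three] at hB
            simp [hvu, hwu, hwv, huv, huw, hvw] at hB)
      (classify R hR) (classify T hT)
    refine ⟨P, hgeo, Or.inl ?_⟩
    rintro l (hl | hl)
    · exact hc l hl
    · rcases hmem l hl with rfl | rfl | rfl | rfl <;> simp [hvu, hwu]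
  · -- never-bottom u : allowed orders [v,u,w], [u,v,w], [u,w,v], [w,u,v]
    have classify : ∀ l ∈ E, l = [v,u,w] ∨ l = [u,v,w] ∨ l = [u,w,v] ∨ l = [w,u,v] := by
      intro l hl
      have h0 := hc l hl
      rcases linOrd_three huv huw hvw (hE l hl) with rfl | rfl | rfl | rfl | rfl | rfl
      · tauto
      · tauto
      · tauto
      · simp at h0
      · tauto
      · simp at h0
    obtain ⟨P, hgeo, hmem⟩ := quad_geodesic (A₃ := {u, v, w})
      (L1 := [v,u,w]) (L2 := [u,v,w]) (L3 := [u,w,v]) (L4 := [w,u,v])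
      (isLinOrd_triple hvu hvw huw (by ext t; simp; tauto))
      (isLinOrd_triple huv huw hvw rfl)
      (isLinOrd_triple huw huv hwv (by ext t; simp; tauto))
      (isLinOrd_triple hwu hwv huv (by ext t; simp; tauto))
      ⟨[], [w], v, u, hvu, rfl, rfl⟩
      ⟨[u], [], v, w, hvw, rfl, rfl⟩
      ⟨[], [v], u, w, huw, rfl, rfl⟩
      (by rw [alike_three]; simp [hvu, hwu, hwv, huv, huw, hvw])
      (by rw [alike_three]; simp [hvu, hwu, hwv, huv, huw, hvw])
      (by rw [alike_three]; simp [hvu, hwu, hwv, huv, huw, hvw])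
      (by simp [hvu, hwu, hwv, huv, huw, hvw]) (by simp [hvu, hwu, hwv, huv, huw, hvw]) (by simp [hvu, hwu, hwv, huv, huw, hvw])
      (by
        rintro M ⟨hA, hB⟩
        rw [alike_three] at hA
        rcases hA with ⟨-, rfl⟩ | ⟨-, rfl⟩ <;>
          · rw [alike_three] at hB
            simp [hvu, hwu, hwv, huv, huw, hvw] at hB)
      (classify R hR) (classify T hT)
    refine ⟨P, hgeo, Or.inr ?_⟩
    rintro l (hl | hl)
    · exact hc l hl
    · rcases hmem l hl with rfl | rfl | rfl | rfl <;> simp [hwu, hvu]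

lemma restrictDom_self' [DecidableEq α] {S : Finset α} {E : Set (List α)}
    (hE : ∀ l ∈ E, IsLinOrd S l) : restrictDom E S = E := by
  have key : ∀ l ∈ E, restrictOrd l S = l := by
    intro l hl
    apply List.filter_eq_self.mpr
    intro x hx
    simp only [decide_eq_true_eq]
    rw [← (hE l hl).2]
    exact List.mem_toFinset.mpr hx
  ext m
  constructor
  · rintro ⟨l, hl, rfl⟩
    show restrictOrd l S ∈ E
    rw [key l hl]; exact hl
  · intro hm
    exact ⟨m, hm, key m hm⟩

end AuxForProof

/-- Let `D ⊆ L(A)` be a peak-pit Condorcet domain.  For all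
distinct `a,b,c ∈ A` and all `R, T ∈ D_{{a,b,c}}`, there is a geodesic `𝒜` on
`L({a,b,c})` connecting `R` and `T` such that `D_{{a,b,c}} ∪ K(𝒜)` is a
peak-pit Condorcet domain. -/
theorem exists_geodesic_triple [DecidableEq α] (A : Finset α)
    (D : Set (List α)) (hD : IsPeakPitDomain A D) (a b c : α)
    (ha : a ∈ A) (hb : b ∈ A) (hc : c ∈ A)
    (hab : a ≠ b) (hac : a ≠ c) (hbc : b ≠ c)
    (R T : List α) (hR : R ∈ restrictDom D {a, b, c})
    (hT : T ∈ restrictDom D {a, b, c}) :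
    ∃ P : List (List α), IsGeodesic {a, b, c} P R T ∧
      IsPeakPitDomain {a, b, c} (restrictDom D {a, b, c} ∪ {l | l ∈ P}) := by
    classical
  obtain ⟨hDlin, hDtrip⟩ := hD
  have hsub : ({a, b, c} : Finset α) ⊆ A := by
    intro t ht
    simp only [Finset.mem_insert, Finset.mem_singleton] at ht
    rcases ht with rfl | rfl | rfl <;> assumption
  have hE : ∀ l ∈ restrictDom D {a, b, c}, IsLinOrd {a, b, c} l := by
    rintro l ⟨m, hm, rfl⟩
    obtain ⟨hnd, hfin⟩ := hDlin m hm
    refine ⟨hnd.filter _, ?_⟩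
    ext t
    simp only [restrictOrd, List.mem_toFinset, List.mem_filter, decide_eq_true_eq]
    constructor
    · rintro ⟨-, ht⟩; exact ht
    · intro ht
      exact ⟨by rw [← List.mem_toFinset, hfin]; exact hsub ht, ht⟩
  obtain ⟨x, hx, hcond⟩ := hDtrip a b c ha hb hc hab hac hbc
  simp only [Finset.mem_insert, Finset.mem_singleton] at hx
  have key : ∀ u v w : α, u ≠ v → u ≠ w → v ≠ w →
      ({u, v, w} : Finset α) = {a, b, c} →
      (NeverCond (restrictDom D {a, b, c}) u 0 ∨ NeverCond (restrictDom D {a, b, c}) u 2) →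
      ∃ P : List (List α), IsGeodesic {a, b, c} P R T ∧
        IsPeakPitDomain {a, b, c} (restrictDom D {a, b, c} ∪ {l | l ∈ P}) := by
    intro u v w huv huw hvw heq hcond'
    rw [← heq] at hE hcond' hR hT ⊢
    obtain ⟨P, hgeo, hNC⟩ := main_helper huv huw hvw hE hcond' hR hT
    have hPlin : ∀ l ∈ P, IsLinOrd {u, v, w} l := hgeo.1.1.2.1
    have hUlin : ∀ l ∈ (restrictDom D {u, v, w} ∪ {l | l ∈ P} : Set (List α)),
        IsLinOrd {u, v, w} l := by
      rintro l (hl | hl)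
      · exact hE l hl
      · exact hPlin l hl
    refine ⟨P, hgeo, hUlin, ?_⟩
    intro a' b' c' ha' hb' hc' h1 h2 h3
    have htrip : ({a', b', c'} : Finset α) = {u, v, w} := by
      apply Finset.eq_of_subset_of_card_le
      · simp only [Finset.insert_subset_iff, Finset.singleton_subset_iff]
        exact ⟨ha', hb', hc'⟩
      · rw [Finset.card_eq_three.mpr ⟨u, v, w, huv, huw, hvw, rfl⟩,
          Finset.card_eq_three.mpr ⟨a', b', c', h1, h2, h3, rfl⟩]
    refine ⟨u, ?_, ?_⟩
    · rw [htrip]; simp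
    · rw [htrip, restrictDom_self' hUlin]
      exact hNC
  rcases hx with h | h | h <;> rw [h] at hcond
  · exact key a b c hab hac hbc rfl hcond
  · exact key b a c hab.symm hbc hac (by ext t; simp; tauto) hcond
  · exact key c a b hac.symm hbc.symm hab (by ext t; simp; tauto) hcond
end
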